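/- arXiv:1511.01635 — 8 statements merged into one kernel-verified Lean document; each statement's English description precedes it below -/
import Mathlib

section
/- If a convex differentiable function f: ℝⁿ → ℝ with nonempty minimizer set 𝒳 satisfies the global error bound property with constant ν (i.e., ‖∇f(x)‖ ≥ ν·d(x,𝒳) for all x), then it satisfies the quadratic growth property with constant ν/2, i.e., f(x) − f* ≥ (ν/4)·d²(x,𝒳) for all x ∈ ℝⁿ. -/
open RealInnerProductSpace Metric Set Filter

abbrev Euc (n : ℕ) : Type := EuclideanSpace ℝ (Fin n)

/-- If `f` has gradient `v` at `y` and `y` is an approximate minimizer in the sense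
that `f z ≥ f y - κ * dist z y` for all `z`, then `‖v‖ ≤ κ`. -/
lemma grad_norm_le_of_approx_min {n : ℕ} (f : Euc n → ℝ) (y v : Euc n)
    (hv : HasGradientAt f v y) (κ : ℝ) (hκ : 0 ≤ κ)
    (hmin : ∀ z, f z ≥ f y - κ * dist z y) : ‖v‖ ≤ κ := by
  rcases eq_or_ne v 0 with h0 | h0
  · simpa [h0]
  -- consider φ t = f (y + t • (-v))
  set w : Euc n := -v with hw
  have hc : HasDerivAt (fun t : ℝ => y + t • w) w 0 := by
    simpa using ((hasDerivAt_id (0 : ℝ)).smul_const w).const_add y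
  have hφ : HasDerivAt (fun t : ℝ => f (y + t • w)) (⟪v, w⟫) 0 := by
    have hF : HasFDerivAt f ((InnerProductSpace.toDual ℝ (Euc n)) v) (y + (0:ℝ) • w) := by
      simpa using hv.hasFDerivAt
    have := hF.comp_hasDerivAt (x := (0 : ℝ)) (f := fun t : ℝ => y + t • w)
      (by simpa [add_comm] using hc)
    simpa [add_comm, Function.comp_def] using this
  have hslope : Filter.Tendsto (slope (fun t : ℝ => f (y + t • w)) 0)
      (nhdsWithin 0 (Set.Ioi 0)) (nhds (⟪v, w⟫)) := by
    refine (hasDerivAt_iff_tendsto_slope.mp hφ).mono_left ?_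
    exact nhdsWithin_mono _ (fun t ht => ne_of_gt ht)
  have hlb : -(κ * ‖v‖) ≤ ⟪v, w⟫ := by
    refine ge_of_tendsto hslope ?_
    filter_upwards [self_mem_nhdsWithin] with t ht
    have ht0 : (0 : ℝ) < t := ht
    have h1 : f (y + t • w) ≥ f y - κ * dist (y + t • w) y := hmin _
    have hdist : dist (y + t • w) y = t * ‖v‖ := by
      rw [dist_eq_norm]
      simp [norm_smul, abs_of_pos ht0, hw]
    have hslope_eq : slope (fun t : ℝ => f (y + t • w)) 0 t
        = (f (y + t • w) - f y) / t := by
      rw [slope_def_field]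
      norm_num
    rw [hslope_eq, le_div_iff₀ ht0]
    rw [ge_iff_le, hdist] at h1
    nlinarith
  have hinner : ⟪v, w⟫ = -(‖v‖ ^ 2) := by
    rw [hw, inner_neg_right, real_inner_self_eq_norm_sq]
  rw [hinner] at hlb
  have hvpos : 0 < ‖v‖ := norm_pos_iff.mpr h0
  nlinarith

theorem stmt_2 {n : ℕ} (f : Euc n → ℝ) (f' : Euc n → Euc n)
    (hconv : ConvexOn ℝ Set.univ f)
    (hgrad : ∀ x, HasGradientAt f (f' x) x)
    (X : Set (Euc n)) (hX : X = {x | ∀ y, f x ≤ f y}) (hne : X.Nonempty)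
    (xs : Euc n) (hxs : xs ∈ X)
    (ν : ℝ) (hν : 0 < ν)
    (hGEB : ∀ x, ‖f' x‖ ≥ ν * Metric.infDist x X) :
    ∀ x, f x - f xs ≥ ν / 4 * (Metric.infDist x X) ^ 2 := by
  have hfs : ∀ z, f xs ≤ f z := by rw [hX] at hxs; exact hxs
  have hfcont : Continuous f := by
    refine continuous_iff_continuousAt.mpr fun x => ?_
    exact (hgrad x).hasFDerivAt.continuousAt
  intro x
  set D : ℝ := Metric.infDist x X with hD
  have hD0 : 0 ≤ D := Metric.infDist_nonneg
  rcases eq_or_lt_of_le hD0 with hD0' | hDpos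
  · have h := hfs x
    rw [← hD0']
    norm_num
    linarith
  -- D > 0. Then f x > f xs.
  set ε : ℝ := f x - f xs with hε
  have hε0 : 0 ≤ ε := by have := hfs x; simp [hε]; linarith
  have hεpos : 0 < ε := by
    rcases eq_or_lt_of_le hε0 with h | h
    · exfalso
      have hxX : x ∈ X := by
        rw [hX]
        intro z
        have : f x = f xs := by simp [hε] at h; linarith
        rw [this]; exact hfs z
      have : D = 0 := by rw [hD]; exact Metric.infDist_zero_of_mem hxX
      linarith
    · exact h
  set lam : ℝ := D / 2 with hlam
  have hlampos : 0 < lam := by positivity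
  set κ : ℝ := ε / lam with hκ
  have hκpos : 0 < κ := by positivity
  -- minimize g z = f z + κ * dist z x
  set g : Euc n → ℝ := fun z => f z + κ * dist z x with hg
  have hgcont : Continuous g :=
    hfcont.add (continuous_const.mul (continuous_id.dist continuous_const))
  have hcoer : Filter.Tendsto g (Filter.cocompact _) Filter.atTop := by
    have h1 : Filter.Tendsto (fun z : Euc n => f xs + κ * dist z x)
        (Filter.cocompact _) Filter.atTop := by
      have hd : Filter.Tendsto (fun z : Euc n => dist z x)
          (Filter.cocompact _) Filter.atTop := tendsto_dist_right_cocompact_atTop x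
      exact tendsto_atTop_add_const_left _ _ (hd.const_mul_atTop hκpos)
    refine Filter.tendsto_atTop_mono (fun z => ?_) h1
    exact add_le_add_left (hfs z) _
  obtain ⟨y, hy⟩ := hgcont.exists_forall_le hcoer
  -- y properties
  have hyx : dist y x ≤ lam := by
    have h1 : g y ≤ g x := hy x
    have h2 : f y + κ * dist y x ≤ f x := by simpa [hg] using h1
    have h3 : κ * dist y x ≤ ε := by
      have := hfs y
      simp only [hε]; linarith
    have : dist y x ≤ ε / κ := by
      rw [le_div_iff₀ hκpos]; linarith [h3]
    calc dist y x ≤ ε / κ := this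
    _ = lam := by rw [hκ]; field_simp [hεpos.ne', hlampos.ne']
  have hyD : lam ≤ Metric.infDist y X := by
    have h1 : Metric.infDist x X ≤ Metric.infDist y X + dist x y :=
      Metric.infDist_le_infDist_add_dist
    rw [dist_comm] at h1
    have : D ≤ Metric.infDist y X + lam := by
      rw [hD]; linarith [hyx]
    linarith [show lam + lam = D by rw [hlam]; ring]
  have hmin : ∀ z, f z ≥ f y - κ * dist z y := by
    intro z
    have h1 : g y ≤ g z := hy z
    have h2 : dist z x ≤ dist z y + dist y x := dist_triangle z y x
    have h3 : f y + κ * dist y x ≤ f z + κ * dist z x := h1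
    have h4 : κ * dist z x ≤ κ * (dist z y + dist y x) :=
      mul_le_mul_of_nonneg_left h2 hκpos.le
    nlinarith
  have hgn : ‖f' y‖ ≤ κ :=
    grad_norm_le_of_approx_min f y (f' y) (hgrad y) κ hκpos.le hmin
  have hlow : ν * lam ≤ κ := by
    calc ν * lam ≤ ν * Metric.infDist y X := by
          exact mul_le_mul_of_nonneg_left hyD hν.le
    _ ≤ ‖f' y‖ := hGEB y
    _ ≤ κ := hgn
  -- conclude: ε ≥ ν * lam^2 = ν * D^2 / 4
  have hfinal : ν * lam * lam ≤ ε := by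
    have := mul_le_mul_of_nonneg_right hlow hlampos.le
    calc ν * lam * lam ≤ κ * lam := this
    _ = ε := by rw [hκ]; field_simp [hlampos.ne']
  have : lam * lam = D ^ 2 / 4 := by rw [hlam]; ring
  nlinarith
end

section
/- Let f be convex differentiable with L-Lipschitz gradient, g closed convex, φ = f + g with nonempty minimizer set 𝒳, and γ ≥ L. If the extended global error bound property holds with constants κ, ω (i.e., ‖G(y)‖ ≥ κ·d(y,𝒳) for all y with φ(y) ≤ φ* + ω), then the extended restricted strong convexity property holds with constants κ²/(2γ), ω: ⟨G(y), y − proj_𝒳(y)⟩ ≥ (κ²/(2γ))·d²(y,𝒳) for all y in the sublevel set. -/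
open RealInnerProductSpace Metric Set Filter

lemma aux_lineDeriv {n : ℕ} (f : Euc n → ℝ) (f' : Euc n → Euc n)
    (hgrad : ∀ x, HasGradientAt f (f' x) x) (u d : Euc n) (t : ℝ) :
    HasDerivAt (fun s : ℝ => f (u + s • d)) ⟪f' (u + t • d), d⟫ t := by
  have h1 : HasDerivAt (fun s : ℝ => u + s • d) d t := by
    simpa using ((hasDerivAt_id t).smul_const d).const_add u
  have h2 := (hgrad (u + t • d)).hasFDerivAt.comp_hasDerivAt t h1
  simp only [InnerProductSpace.toDual_apply_apply] at h2
  exact h2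

lemma aux_convex_fo {n : ℕ} (f : Euc n → ℝ) (f' : Euc n → Euc n)
    (hconv : ConvexOn ℝ Set.univ f) (hgrad : ∀ x, HasGradientAt f (f' x) x)
    (y q : Euc n) : f y + ⟪f' y, q - y⟫ ≤ f q := by
  have hline : ConvexOn ℝ Set.univ (fun t : ℝ => f (y + t • (q - y))) := by
    have h := hconv.comp_affineMap (AffineMap.lineMap y q)
    have he : (fun t : ℝ => f (y + t • (q - y))) = f ∘ (AffineMap.lineMap y q) := by
      funext t
      simp [AffineMap.lineMap_apply, add_comm]
    rw [he]
    simpa using h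
  have hder := aux_lineDeriv f f' hgrad y (q - y) 0
  have hder' : HasDerivAt (fun s : ℝ => f (y + s • (q - y))) ⟪f' y, q - y⟫ 0 := by
    simpa only [zero_smul, add_zero] using hder
  have hs := hline.le_slope_of_hasDerivAt (mem_univ 0) (mem_univ 1) one_pos hder'
  have : slope (fun t : ℝ => f (y + t • (q - y))) 0 1 = f q - f y := by
    simp [slope_def_field]
  rw [this] at hs
  linarith

lemma aux_descent {n : ℕ} (L : ℝ) (hL : 0 < L) (f : Euc n → ℝ) (f' : Euc n → Euc n)
    (hgrad : ∀ x, HasGradientAt f (f' x) x)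
    (hLip : ∀ x y, ‖f' x - f' y‖ ≤ L * ‖x - y‖)
    (y z : Euc n) : f z ≤ f y + ⟪f' y, z - y⟫ + L / 2 * ‖z - y‖ ^ 2 := by
  set d := z - y with hd
  have hf'cont : Continuous f' := by
    have : LipschitzWith (Real.toNNReal L) f' := by
      apply LipschitzWith.of_dist_le_mul
      intro a b
      rw [dist_eq_norm, dist_eq_norm, Real.coe_toNNReal _ hL.le]
      exact hLip a b
    exact this.continuous
  have hcont : Continuous fun t : ℝ => ⟪f' (y + t • d), d⟫ := by
    apply Continuous.inner
    · exact hf'cont.comp (by continuity)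
    · exact continuous_const
  have hkey : ∀ t ∈ Set.uIcc (0:ℝ) 1,
      HasDerivAt (fun s : ℝ => f (y + s • d)) ⟪f' (y + t • d), d⟫ t :=
    fun t _ => aux_lineDeriv f f' hgrad y d t
  have hint := intervalIntegral.integral_eq_sub_of_hasDerivAt hkey
    (hcont.intervalIntegrable 0 1)
  have hmono : (∫ t in (0:ℝ)..1, ⟪f' (y + t • d), d⟫) ≤
      ∫ t in (0:ℝ)..1, (⟪f' y, d⟫ + (L * ‖d‖ ^ 2) * t) := by
    apply intervalIntegral.integral_mono_on zero_le_one (hcont.intervalIntegrable 0 1)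
      ((Continuous.intervalIntegrable (by continuity) 0 1))
    intro t ht
    have h1 : ⟪f' (y + t • d) - f' y, d⟫ ≤ ‖f' (y + t • d) - f' y‖ * ‖d‖ :=
      real_inner_le_norm _ _
    have h2 : ‖f' (y + t • d) - f' y‖ ≤ L * ‖t • d‖ := by
      simpa using hLip (y + t • d) y
    have h3 : ‖t • d‖ = t * ‖d‖ := by
      rw [norm_smul, Real.norm_eq_abs, abs_of_nonneg ht.1]
    rw [inner_sub_left] at h1
    rw [h3] at h2
    nlinarith [mul_le_mul_of_nonneg_right h2 (norm_nonneg d), norm_nonneg d, ht.1]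
  have hR : (∫ t in (0:ℝ)..1, (⟪f' y, d⟫ + (L * ‖d‖ ^ 2) * t)) =
      ⟪f' y, d⟫ + L / 2 * ‖d‖ ^ 2 := by
    rw [intervalIntegral.integral_add (intervalIntegrable_const)
      (Continuous.intervalIntegrable (by continuity) 0 1),
      intervalIntegral.integral_const_mul, integral_id]
    simp
    ring
  have h0 : y + (0:ℝ) • d = y := by simp
  have h1 : y + (1:ℝ) • d = z := by simp [hd]
  rw [h0, h1] at hint
  rw [hR] at hmono
  linarith [hint ▸ hmono]

lemma aux_lim (A B : ℝ) (hB : 0 ≤ B) (h : ∀ t : ℝ, 0 < t → t ≤ 1 → 0 ≤ A + B * t) : 0 ≤ A := by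
  by_contra hA
  push_neg at hA
  set t := min 1 (-A / (2 * (B + 1))) with htdef
  have ht0 : 0 < t := lt_min one_pos (div_pos (by linarith) (by linarith))
  have ht1 : t ≤ 1 := min_le_left _ _
  have h2 : t ≤ -A / (2 * (B + 1)) := min_le_right _ _
  have h3 := h t ht0 ht1
  have hkey : (B + 1) * (-A / (2 * (B + 1))) = -A / 2 := by
    field_simp
  nlinarith [mul_le_mul_of_nonneg_left h2 (by linarith : (0:ℝ) ≤ B + 1)]

set_option maxHeartbeats 1000000 in
theorem stmt_4 {n : ℕ} (L γ : ℝ) (hL : 0 < L) (hγ : γ ≥ L)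
    (f : Euc n → ℝ) (f' : Euc n → Euc n) (g : Euc n → EReal)
    (hconv : ConvexOn ℝ Set.univ f)
    (hgrad : ∀ x, HasGradientAt f (f' x) x)
    (hLip : ∀ x y, ‖f' x - f' y‖ ≤ L * ‖x - y‖)
    (hgbot : ∀ x, g x ≠ ⊥) (hgtop : ∃ x, g x ≠ ⊤)
    (hglsc : LowerSemicontinuous g)
    (hgconv : ∀ x y : Euc n, ∀ a b : ℝ, 0 ≤ a → 0 ≤ b → a + b = 1 →
      g (a • x + b • y) ≤ (a : EReal) * g x + (b : EReal) * g y)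
    (p : Euc n → Euc n)
    (hp : ∀ xb x, ((f xb + ⟪f' xb, p xb - xb⟫ + γ / 2 * ‖p xb - xb‖ ^ 2 : ℝ) : EReal) + g (p xb)
        ≤ ((f xb + ⟪f' xb, x - xb⟫ + γ / 2 * ‖x - xb‖ ^ 2 : ℝ) : EReal) + g x)
    (X : Set (Euc n))
    (hX : X = {x | ∀ y, (f x : EReal) + g x ≤ (f y : EReal) + g y})
    (hne : X.Nonempty)
    (xs : Euc n) (hxs : xs ∈ X)
    (fstar : ℝ) (hstar : (f xs : EReal) + g xs = (fstar : ℝ))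
    (κ ω : ℝ) (hκ : 0 < κ) (hω : 0 < ω)
    (heGEB : ∀ y, (f y : EReal) + g y ≤ ((fstar + ω : ℝ) : EReal) →
      ‖γ • (y - p y)‖ ≥ κ * Metric.infDist y X) :
    ∀ y, (f y : EReal) + g y ≤ ((fstar + ω : ℝ) : EReal) →
      ∀ q ∈ X, dist y q = Metric.infDist y X →
        ⟪γ • (y - p y), y - q⟫ ≥ κ ^ 2 / (2 * γ) * (Metric.infDist y X) ^ 2 := by
  intro y hφy q hq hdq
  have hγ0 : 0 < γ := lt_of_lt_of_le hL hγ
  set P := p y with hPdef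
  rw [hX] at hq
  have hq' : ∀ z, (f q : EReal) + g q ≤ (f z : EReal) + g z := hq
  -- finiteness of g q
  have hφq : (f q : EReal) + g q ≤ ((fstar : ℝ) : EReal) := hstar ▸ hq' xs
  have hgqt : g q ≠ ⊤ := by
    intro h
    rw [h, EReal.add_top_of_ne_bot (EReal.coe_ne_bot _)] at hφq
    exact (EReal.coe_lt_top _).not_ge hφq
  set rq := (g q).toReal with hrqdef
  have hgq : ((rq : ℝ) : EReal) = g q := EReal.coe_toReal hgqt (hgbot q)
  -- finiteness of g P
  have hgPt : g P ≠ ⊤ := by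
    intro h
    have hhp := hp y q
    rw [← hPdef, h, EReal.add_top_of_ne_bot (EReal.coe_ne_bot _), ← hgq,
      ← EReal.coe_add] at hhp
    exact (EReal.coe_lt_top _).not_ge hhp
  set rp := (g P).toReal with hrpdef
  have hgp : ((rp : ℝ) : EReal) = g P := EReal.coe_toReal hgPt (hgbot P)
  -- (i) : phi q <= phi P
  have hi : f q + rq ≤ f P + rp := by
    have h := hq' P
    rw [← hgq, ← hgp, ← EReal.coe_add, ← EReal.coe_add, EReal.coe_le_coe_iff] at h
    exact h
  -- (ii) : first-order optimality of P
  have hA : 0 ≤ ⟪f' y, q - P⟫ + γ * ⟪P - y, q - P⟫ + rq - rp := by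
    apply aux_lim _ (γ / 2 * ‖q - P‖ ^ 2) (by positivity)
    intro t ht0 ht1
    have hxt : (1 - t) • P + t • q = P + t • (q - P) := by module
    have hgc := hgconv P q (1 - t) t (by linarith) ht0.le (by ring)
    rw [hxt, ← hgq, ← hgp] at hgc
    have hgc' : g (P + t • (q - P)) ≤ (((1 - t) * rp + t * rq : ℝ) : EReal) := by
      rw [EReal.coe_add, EReal.coe_mul, EReal.coe_mul]; exact hgc
    have hhp := hp y (P + t • (q - P))
    rw [← hPdef] at hhp
    have hchain : ((f y + ⟪f' y, P - y⟫ + γ / 2 * ‖P - y‖ ^ 2 : ℝ) : EReal) + ((rp : ℝ) : EReal)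
        ≤ ((f y + ⟪f' y, P + t • (q - P) - y⟫ + γ / 2 * ‖P + t • (q - P) - y‖ ^ 2 : ℝ) : EReal)
          + (((1 - t) * rp + t * rq : ℝ) : EReal) := by
      rw [hgp]
      exact le_trans hhp (add_le_add_right hgc' _)
    rw [← EReal.coe_add, ← EReal.coe_add, EReal.coe_le_coe_iff] at hchain
    have he1 : P + t • (q - P) - y = (P - y) + t • (q - P) := by module
    have he2 : ⟪f' y, (P - y) + t • (q - P)⟫ = ⟪f' y, P - y⟫ + t * ⟪f' y, q - P⟫ := by
      rw [inner_add_right, real_inner_smul_right]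
    have he3 : ‖(P - y) + t • (q - P)‖ ^ 2
        = ‖P - y‖ ^ 2 + 2 * (t * ⟪P - y, q - P⟫) + t ^ 2 * ‖q - P‖ ^ 2 := by
      rw [norm_add_sq_real, real_inner_smul_right, norm_smul, Real.norm_eq_abs,
        abs_of_nonneg ht0.le, mul_pow]
    rw [he1, he2, he3] at hchain
    nlinarith [hchain, ht0]
  -- (iii) convexity first order
  have hio : f y + ⟪f' y, q - y⟫ ≤ f q := aux_convex_fo f f' hconv hgrad y q
  -- (iv) descent lemma
  have hiv : f P ≤ f y + ⟪f' y, P - y⟫ + L / 2 * ‖P - y‖ ^ 2 :=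
    aux_descent L hL f f' hgrad hLip y P
  -- expansions
  have e1 : ⟪f' y, q - P⟫ = ⟪f' y, q - y⟫ + ⟪f' y, y - P⟫ := by
    rw [← inner_add_right]; congr 1; abel
  have e2 : ⟪P - y, q - P⟫ = -⟪y - P, q - y⟫ - ‖y - P‖ ^ 2 := by
    have hne1 : P - y = -(y - P) := by abel
    have hne2 : q - P = (q - y) + (y - P) := by abel
    rw [hne1, inner_neg_left, hne2, inner_add_right, real_inner_self_eq_norm_sq]
    ring
  have e3 : ⟪y - P, q - y⟫ = -⟪y - P, y - q⟫ := by
    rw [← inner_neg_right]; congr 1; abel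
  have e4 : ‖P - y‖ = ‖y - P‖ := norm_sub_rev _ _
  have e5 : ⟪f' y, P - y⟫ = -⟪f' y, y - P⟫ := by
    rw [← inner_neg_right]; congr 1; abel
  rw [e1, e2, e3] at hA
  rw [e4, e5] at hiv
  -- main inequality
  have hmain : γ / 2 * ‖y - P‖ ^ 2 ≤ γ * ⟪y - P, y - q⟫ := by
    nlinarith [hA, hi, hio, hiv,
      mul_nonneg (by linarith : (0:ℝ) ≤ γ - L) (sq_nonneg ‖y - P‖)]
  -- error bound
  have hd0 : Metric.infDist y X = ‖y - q‖ := by rw [← hdq, dist_eq_norm]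
  have hGEB := heGEB y hφy
  rw [← hPdef, hd0] at hGEB
  have hGn : ‖γ • (y - P)‖ = γ * ‖y - P‖ := by
    rw [norm_smul, Real.norm_eq_abs, abs_of_pos hγ0]
  rw [hGn] at hGEB
  have hfin : κ ^ 2 * ‖y - q‖ ^ 2 ≤ γ ^ 2 * ‖y - P‖ ^ 2 := by
    nlinarith [hGEB, mul_nonneg hκ.le (norm_nonneg (y - q))]
  rw [real_inner_smul_left, hd0, ge_iff_le, div_mul_eq_mul_div,
    div_le_iff₀ (by linarith : (0:ℝ) < 2 * γ)]
  nlinarith [hfin, mul_le_mul_of_nonneg_left hmain (by linarith : (0:ℝ) ≤ 2 * γ)]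
end

section
/- Let f: ℝⁿ → ℝ be convex differentiable with L-Lipschitz gradient and g: ℝⁿ → ℝ ∪ {+∞} closed convex, and let γ ≥ L. Then for any x̄, the proximal gradient step p(x̄) = argminₓ [f(x̄) + ⟨∇f(x̄), x − x̄⟩ + (γ/2)‖x − x̄‖² + g(x)] satisfies, for all x: φ(x) − φ(p(x̄)) ≥ ⟨G(x̄), x − x̄⟩ + (1/(2γ))‖G(x̄)‖², where φ = f + g and G(x̄) = γ(x̄ − p(x̄)). -/
open RealInnerProductSpace Metric Set Filter

lemma line_deriv {n : ℕ} (f : Euc n → ℝ) (v : Euc n) (a d : Euc n) (t : ℝ)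
    (h : HasGradientAt f v (a + t • d)) :
    HasDerivAt (fun s : ℝ => f (a + s • d)) ⟪v, d⟫ t := by
  have hline : HasDerivAt (fun s : ℝ => a + s • d) d t := by
    simpa using ((hasDerivAt_id t).smul_const d).const_add a
  have := (h.hasFDerivAt).comp_hasDerivAt t hline
  simpa [InnerProductSpace.toDual_apply_apply, Function.comp_def] using this

lemma grad_convex_ineq {n : ℕ} (f : Euc n → ℝ) (f' : Euc n → Euc n)
    (hconv : ConvexOn ℝ Set.univ f) (hgrad : ∀ x, HasGradientAt f (f' x) x)
    (a b : Euc n) : f a + ⟪f' a, b - a⟫ ≤ f b := by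
  set d := b - a with hd
  have hder : HasDerivAt (fun s : ℝ => f (a + s • d)) ⟪f' a, d⟫ 0 :=
    line_deriv f (f' a) a d 0 (by simpa using hgrad a)
  have hslope : ∀ t ∈ Set.Ioc (0:ℝ) 1,
      slope (fun s : ℝ => f (a + s • d)) 0 t ≤ f b - f a := by
    intro t ht
    have hpt : a + t • d = (1 - t) • a + t • b := by
      rw [hd, sub_smul, one_smul, smul_sub]; abel
    have hcomb := hconv.2 (Set.mem_univ a) (Set.mem_univ b)
      (by linarith [ht.2] : (0:ℝ) ≤ 1 - t) ht.1.le (by ring)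
    rw [slope_def_field]
    simp only [sub_zero, zero_smul, add_zero]
    rw [div_le_iff₀ ht.1]
    have : (1 - t) * f a + t * f b = f a + (f b - f a) * t := by ring
    rw [hpt]
    linarith [hcomb, this ▸ hcomb]
  have htend : Tendsto (slope (fun s : ℝ => f (a + s • d)) 0) (nhdsWithin 0 {(0:ℝ)}ᶜ)
      (nhds ⟪f' a, d⟫) := hasDerivAt_iff_tendsto_slope.mp hder
  have htend' : Tendsto (slope (fun s : ℝ => f (a + s • d)) 0) (nhdsWithin 0 (Set.Ioi (0:ℝ)))
      (nhds ⟪f' a, d⟫) :=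
    htend.mono_left (nhdsWithin_mono 0 (fun y hy => Set.mem_compl_singleton_iff.mpr (ne_of_gt hy)))
  have hle : ⟪f' a, d⟫ ≤ f b - f a :=
    le_of_tendsto htend'
      (eventually_of_mem (Ioc_mem_nhdsGT_of_mem ⟨le_rfl, zero_lt_one⟩) hslope)
  linarith

lemma descent_lemma {n : ℕ} (L : ℝ) (hL : 0 < L) (f : Euc n → ℝ) (f' : Euc n → Euc n)
    (hgrad : ∀ x, HasGradientAt f (f' x) x) (hLip : ∀ x y, ‖f' x - f' y‖ ≤ L * ‖x - y‖)
    (a b : Euc n) : f b ≤ f a + ⟪f' a, b - a⟫ + L / 2 * ‖b - a‖ ^ 2 := by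
  set d := b - a with hd
  have hf'c : Continuous f' := by
    have : LipschitzWith (Real.toNNReal L) f' := by
      apply LipschitzWith.of_dist_le_mul
      intro x y
      rw [dist_eq_norm, dist_eq_norm]
      simpa [Real.coe_toNNReal L hL.le] using hLip x y
    exact this.continuous
  have hψc : Continuous (fun t : ℝ => ⟪f' (a + t • d), d⟫) := by
    apply Continuous.inner
    · exact hf'c.comp (by continuity)
    · exact continuous_const
  have hder : ∀ t ∈ Set.uIcc (0:ℝ) 1,
      HasDerivAt (fun s : ℝ => f (a + s • d)) ⟪f' (a + t • d), d⟫ t :=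
    fun t _ => line_deriv f _ a d t (hgrad _)
  have hftc := intervalIntegral.integral_eq_sub_of_hasDerivAt hder
    (hψc.intervalIntegrable 0 1)
  have hend : f (a + (1:ℝ) • d) = f b := by rw [hd]; norm_num
  have hstart : f (a + (0:ℝ) • d) = f a := by norm_num
  rw [hend, hstart] at hftc
  have hintbound : ∫ t in (0:ℝ)..1, ⟪f' (a + t • d), d⟫ ≤
      ∫ t in (0:ℝ)..1, (⟪f' a, d⟫ + L * ‖d‖ ^ 2 * t) := by
    apply intervalIntegral.integral_mono_on zero_le_one (hψc.intervalIntegrable 0 1)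
      ((by fun_prop : Continuous (fun t : ℝ => ⟪f' a, d⟫ + L * ‖d‖ ^ 2 * t)).intervalIntegrable 0 1)
    intro t ht
    have h1 : ⟪f' (a + t • d), d⟫ - ⟪f' a, d⟫ = ⟪f' (a + t • d) - f' a, d⟫ :=
      (inner_sub_left _ _ _).symm
    have h2 : ⟪f' (a + t • d) - f' a, d⟫ ≤ ‖f' (a + t • d) - f' a‖ * ‖d‖ :=
      real_inner_le_norm _ _
    have h3 : ‖f' (a + t • d) - f' a‖ ≤ L * (t * ‖d‖) := by
      have := hLip (a + t • d) a
      simpa [norm_smul, abs_of_nonneg ht.1, mul_assoc] using this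
    have h4 := mul_le_mul_of_nonneg_right h3 (norm_nonneg d)
    nlinarith [norm_nonneg d, ht.1]
  have hval : ∫ t in (0:ℝ)..1, (⟪f' a, d⟫ + L * ‖d‖ ^ 2 * t) =
      ⟪f' a, d⟫ + L * ‖d‖ ^ 2 * (1 / 2) := by
    rw [intervalIntegral.integral_add (intervalIntegrable_const)
      ((by fun_prop : Continuous (fun t : ℝ => L * ‖d‖ ^ 2 * t)).intervalIntegrable 0 1)]
    have h5 : ∫ t in (0:ℝ)..1, L * ‖d‖ ^ 2 * t = L * ‖d‖ ^ 2 * (1 / 2) := by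
      rw [intervalIntegral.integral_const_mul]
      simp [integral_id]
    rw [h5]
    simp
  rw [hval, hftc] at hintbound
  linarith

set_option maxHeartbeats 1000000 in
theorem stmt_5 {n : ℕ} (L γ : ℝ) (hL : 0 < L) (hγ : γ ≥ L)
    (f : Euc n → ℝ) (f' : Euc n → Euc n) (g : Euc n → EReal)
    (hconv : ConvexOn ℝ Set.univ f)
    (hgrad : ∀ x, HasGradientAt f (f' x) x)
    (hLip : ∀ x y, ‖f' x - f' y‖ ≤ L * ‖x - y‖)
    (hgbot : ∀ x, g x ≠ ⊥) (hgtop : ∃ x, g x ≠ ⊤)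
    (hglsc : LowerSemicontinuous g)
    (hgconv : ∀ x y : Euc n, ∀ a b : ℝ, 0 ≤ a → 0 ≤ b → a + b = 1 →
      g (a • x + b • y) ≤ (a : EReal) * g x + (b : EReal) * g y)
    (p : Euc n → Euc n)
    (hp : ∀ xb x, ((f xb + ⟪f' xb, p xb - xb⟫ + γ / 2 * ‖p xb - xb‖ ^ 2 : ℝ) : EReal) + g (p xb)
        ≤ ((f xb + ⟪f' xb, x - xb⟫ + γ / 2 * ‖x - xb‖ ^ 2 : ℝ) : EReal) + g x) :
    ∀ xb x, ((f x : EReal) + g x) ≥ ((f (p xb) : EReal) + g (p xb))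
      + ((⟪γ • (xb - p xb), x - xb⟫ + 1 / (2 * γ) * ‖γ • (xb - p xb)‖ ^ 2 : ℝ) : EReal) := by
  have hγpos : 0 < γ := lt_of_lt_of_le hL hγ
  intro xb x
  set q := p xb with hq
  obtain ⟨x₀, hx₀⟩ := hgtop
  have hgq_ne_top : g q ≠ ⊤ := by
    intro h
    have h0 := hp xb x₀
    rw [← hq, h, EReal.add_top_of_ne_bot (EReal.coe_ne_bot _)] at h0
    exact (EReal.add_lt_top (EReal.coe_ne_top _) hx₀).ne (top_le_iff.mp h0)
  set gq : ℝ := (g q).toReal with hgqdef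
  have hgq : (gq : EReal) = g q := EReal.coe_toReal hgq_ne_top (hgbot q)
  by_cases hxtop : g x = ⊤
  · rw [hxtop, EReal.add_top_of_ne_bot (EReal.coe_ne_bot _)]
    exact le_top
  · set gx : ℝ := (g x).toReal with hgxdef
    have hgx : (gx : EReal) = g x := EReal.coe_toReal hxtop (hgbot x)
    -- Step C: first-order optimality of q
    have hkey : ∀ t : ℝ, t ∈ Set.Ioc (0:ℝ) 1 →
        ⟪f' xb, q - xb⟫ + γ / 2 * ‖q - xb‖ ^ 2 + gq ≤
        (⟪f' xb, q - xb⟫ + t * ⟪f' xb, x - q⟫) +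
          γ / 2 * (‖q - xb‖ ^ 2 + 2 * (t * ⟪q - xb, x - q⟫) + t ^ 2 * ‖x - q‖ ^ 2) +
          ((1 - t) * gq + t * gx) := by
      intro t ht
      have hy : (1 - t) • q + t • x = q + t • (x - q) := by
        rw [sub_smul, one_smul, smul_sub]; abel
      have hgy := hgconv q x (1 - t) t (by linarith [ht.2]) ht.1.le (by ring)
      rw [hy, ← hgq, ← hgx] at hgy
      have hgy' : g (q + t • (x - q)) ≤ (((1 - t) * gq + t * gx : ℝ) : EReal) := by
        rw [EReal.coe_add, EReal.coe_mul, EReal.coe_mul]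
        exact hgy
      have h0 := hp xb (q + t • (x - q))
      rw [← hq, ← hgq] at h0
      have h1 := le_trans h0 (add_le_add_right hgy' _)
      rw [← EReal.coe_add, ← EReal.coe_add, EReal.coe_le_coe_iff] at h1
      have e1 : q + t • (x - q) - xb = (q - xb) + t • (x - q) := add_sub_right_comm _ _ _
      have e2 : ⟪f' xb, (q - xb) + t • (x - q)⟫ =
          ⟪f' xb, q - xb⟫ + t * ⟪f' xb, x - q⟫ := by
        rw [inner_add_right, real_inner_smul_right]
      have e3 : ‖(q - xb) + t • (x - q)‖ ^ 2 =
          ‖q - xb‖ ^ 2 + 2 * (t * ⟪q - xb, x - q⟫) + t ^ 2 * ‖x - q‖ ^ 2 := by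
        rw [norm_add_sq_real, real_inner_smul_right, norm_smul, Real.norm_eq_abs,
          mul_pow, sq_abs]
      rw [e1, e2, e3] at h1
      linarith [h1]
    set C : ℝ := ⟪f' xb, x - q⟫ + γ * ⟪q - xb, x - q⟫ + (gx - gq) with hCdef
    set K : ℝ := γ / 2 * ‖x - q‖ ^ 2 with hKdef
    have hCt : ∀ t ∈ Set.Ioc (0:ℝ) 1, 0 ≤ C + t * K := by
      intro t ht
      have h := hkey t ht
      have h' : 0 ≤ t * (C + t * K) := by
        have heq : t * (C + t * K) =
            ((⟪f' xb, q - xb⟫ + t * ⟪f' xb, x - q⟫) +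
              γ / 2 * (‖q - xb‖ ^ 2 + 2 * (t * ⟪q - xb, x - q⟫) + t ^ 2 * ‖x - q‖ ^ 2) +
              ((1 - t) * gq + t * gx)) -
            (⟪f' xb, q - xb⟫ + γ / 2 * ‖q - xb‖ ^ 2 + gq) := by
          rw [hCdef, hKdef]; ring
        linarith [heq ▸ sub_nonneg.mpr h]
      have := div_nonneg h' ht.1.le
      rwa [mul_comm, mul_div_assoc, div_self ht.1.ne', mul_one] at this
    have hC : 0 ≤ C := by
      have htd : Tendsto (fun t : ℝ => C + t * K) (nhdsWithin 0 (Set.Ioi (0:ℝ))) (nhds C) := by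
        have hcont : Continuous (fun t : ℝ => C + t * K) := by continuity
        have := (hcont.tendsto 0).mono_left (nhdsWithin_le_nhds (s := Set.Ioi (0:ℝ)))
        simpa using this
      exact ge_of_tendsto htd
        (eventually_of_mem (Ioc_mem_nhdsGT_of_mem ⟨le_rfl, zero_lt_one⟩) hCt)
    -- Main inequalities
    have hA := grad_convex_ineq f f' hconv hgrad xb x
    have hB := descent_lemma L hL f f' hgrad hLip xb q
    -- rewrite goal to reals
    rw [ge_iff_le, ← hgq, ← hgx, ← EReal.coe_add, ← EReal.coe_add, ← EReal.coe_add,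
      EReal.coe_le_coe_iff]
    have e4 : ⟪γ • (xb - q), x - xb⟫ = γ * ⟪xb - q, x - xb⟫ := real_inner_smul_left _ _ _
    have e5 : 1 / (2 * γ) * ‖γ • (xb - q)‖ ^ 2 = γ / 2 * ‖xb - q‖ ^ 2 := by
      rw [norm_smul, Real.norm_eq_abs, abs_of_pos hγpos, mul_pow]
      field_simp
    have e6 : ⟪q - xb, x - q⟫ = -⟪xb - q, x - xb⟫ - ‖xb - q‖ ^ 2 := by
      have hxq : x - q = (x - xb) + (xb - q) := by abel
      rw [hxq, inner_add_right, show q - xb = -(xb - q) by abel, inner_neg_left,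
        inner_neg_left, real_inner_self_eq_norm_sq]
      ring
    have e7 : ⟪f' xb, x - q⟫ = ⟪f' xb, x - xb⟫ - ⟪f' xb, q - xb⟫ := by
      rw [show x - q = (x - xb) - (q - xb) by abel, inner_sub_right]
    have e8 : ‖q - xb‖ = ‖xb - q‖ := norm_sub_rev _ _
    rw [hCdef, e6, e7] at hC
    rw [e8] at hB
    have hB2 : L / 2 * ‖xb - q‖ ^ 2 ≤ γ / 2 * ‖xb - q‖ ^ 2 :=
      mul_le_mul_of_nonneg_right (by linarith : L / 2 ≤ γ / 2) (sq_nonneg _)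
    rw [e4, e5]
    linarith [hA, hB, hC, hB2]
end

section
/- Under the extended quadratic growth property eQG(τ, ω) for φ = f + g (f convex with L-Lipschitz gradient, g closed convex), the proximal gradient iterates x_{k+1} = x_k − (1/γ)G(x_k) with γ ≥ L satisfy, for all k beyond some index m, the Q-linear decrease of distances: d(x_{k+1}, 𝒳) ≤ √(γ/(γ+τ))·d(x_k, 𝒳). -/
open RealInnerProductSpace Metric Set Filter

section helpers

lemma coe_add_le_coe' {a b : ℝ} {c : EReal} (hb : c ≠ ⊥) (h : (a:EReal) + c ≤ (b:EReal)) :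
    c ≠ ⊤ ∧ a + c.toReal ≤ b := by
  induction c using EReal.rec with
  | bot => simp at hb
  | coe r =>
    refine ⟨by simp, ?_⟩
    rw [← EReal.coe_add] at h
    exact_mod_cast h
  | top =>
    exfalso
    rw [EReal.add_top_of_ne_bot (by simp)] at h
    exact (EReal.coe_ne_top b) (top_le_iff.1 h)

lemma le_coe_toReal' {c : EReal} {r : ℝ} (hb : c ≠ ⊥) (h : c ≤ (r:EReal)) :
    c ≠ ⊤ ∧ c.toReal ≤ r := by
  induction c using EReal.rec with
  | bot => simp at hb
  | coe s => exact ⟨by simp, by exact_mod_cast h⟩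
  | top => exact absurd (top_le_iff.1 h) (EReal.coe_ne_top r)

lemma coe_add_eq_coe' {a r : ℝ} {c : EReal} (hb : c ≠ ⊥) (h : (a:EReal) + c = (r:EReal)) :
    c = ((r - a : ℝ) : EReal) := by
  induction c using EReal.rec with
  | bot => simp at hb
  | coe s =>
    rw [← EReal.coe_add] at h
    have : a + s = r := by exact_mod_cast h
    norm_num [← this]
  | top =>
    exfalso
    rw [EReal.add_top_of_ne_bot (by simp)] at h
    exact (EReal.coe_ne_top r) h.symm

lemma lim01' {A B c : ℝ} (h : ∀ t : ℝ, t ∈ Set.Ioo (0:ℝ) 1 → A + c * (1 - t) ≤ B) :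
    A + c ≤ B := by
  have hc : Continuous (fun t : ℝ => A + c * (1 - t)) := by continuity
  have ht : Filter.Tendsto (fun t : ℝ => A + c * (1 - t)) (nhdsWithin 0 (Set.Ioi 0))
      (nhds (A + c)) := by
    have := (hc.tendsto 0).mono_left (nhdsWithin_le_nhds (s := Set.Ioi (0:ℝ)))
    simpa using this
  refine le_of_tendsto ht ?_
  filter_upwards [Ioo_mem_nhdsGT_of_mem (Set.mem_Ico.2 ⟨le_refl (0:ℝ), zero_lt_one⟩)] with t htt
  exact h t htt

lemma limeps' {A B d : ℝ} (h : ∀ ε : ℝ, 0 < ε → A ≤ B * (d + ε) ^ 2) : A ≤ B * d ^ 2 := by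
  have hc : Continuous (fun ε : ℝ => B * (d + ε) ^ 2) := by continuity
  have ht : Filter.Tendsto (fun ε : ℝ => B * (d + ε) ^ 2) (nhdsWithin 0 (Set.Ioi 0))
      (nhds (B * d ^ 2)) := by
    have := (hc.tendsto 0).mono_left (nhdsWithin_le_nhds (s := Set.Ioi (0:ℝ)))
    simpa using this
  refine ge_of_tendsto ht ?_
  filter_upwards [self_mem_nhdsWithin] with ε hε
  exact h ε hε

lemma normsq_combo' {n : ℕ} (v w : EuclideanSpace ℝ (Fin n)) (t : ℝ) :
    ‖(1 - t) • v + t • w‖ ^ 2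
      = (1 - t) * ‖v‖ ^ 2 + t * ‖w‖ ^ 2 - t * (1 - t) * ‖w - v‖ ^ 2 := by
  simp only [norm_add_sq_real, norm_sub_sq_real, norm_smul, real_inner_smul_left,
    real_inner_smul_right, Real.norm_eq_abs, mul_pow, sq_abs]
  rw [real_inner_comm w v]
  ring

variable {n : ℕ} {f : Euc n → ℝ} {f' : Euc n → Euc n}

theorem dirDeriv' (hgrad : ∀ x, HasGradientAt f (f' x) x) (a v : Euc n) (t : ℝ) :
    HasDerivAt (fun s : ℝ => f (a + s • v)) ⟪f' (a + t • v), v⟫ t := by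
  have hc : HasDerivAt (fun s : ℝ => a + s • v) v t := by
    simpa using ((hasDerivAt_id t).smul_const v).const_add a
  have := (hgrad (a + t • v)).hasFDerivAt.comp_hasDerivAt t hc
  simp [InnerProductSpace.toDual] at this
  exact this

theorem descent' (L : ℝ) (hgrad : ∀ x, HasGradientAt f (f' x) x)
    (hLip : ∀ x y, ‖f' x - f' y‖ ≤ L * ‖x - y‖) (a y : Euc n) :
    f y ≤ f a + ⟪f' a, y - a⟫ + L / 2 * ‖y - a‖ ^ 2 := by
  set v := y - a with hv
  have hay : y = a + (1:ℝ) • v := by simp [hv]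
  set ψ : ℝ → ℝ := fun t => f (a + t • v) - t * ⟪f' a, v⟫ - L / 2 * t ^ 2 * ‖v‖ ^ 2 with hψ
  have hd : ∀ t : ℝ, HasDerivAt ψ (⟪f' (a + t • v), v⟫ - ⟪f' a, v⟫ - L * t * ‖v‖ ^ 2) t := by
    intro t
    have h1 := dirDeriv' hgrad a v t
    have h2 : HasDerivAt (fun t : ℝ => t * ⟪f' a, v⟫) ⟪f' a, v⟫ t := by
      simpa using (hasDerivAt_id t).mul_const ⟪f' a, v⟫
    have h3 : HasDerivAt (fun t : ℝ => L / 2 * t ^ 2 * ‖v‖ ^ 2) (L * t * ‖v‖ ^ 2) t := by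
      have h3' := ((hasDerivAt_pow 2 t).const_mul (L / 2)).mul_const (‖v‖ ^ 2)
      exact h3'.congr_deriv (by push_cast; ring)
    exact (h1.sub h2).sub h3
  have hanti : AntitoneOn ψ (Set.Icc 0 1) := by
    apply antitoneOn_of_deriv_nonpos (convex_Icc 0 1)
    · exact (continuous_iff_continuousAt.2 fun t => (hd t).continuousAt).continuousOn
    · intro t ht
      exact (hd t).differentiableAt.differentiableWithinAt
    · intro t ht
      rw [(hd t).deriv]
      simp only [interior_Icc, Set.mem_Ioo] at ht
      have hsub : ⟪f' (a + t • v), v⟫ - ⟪f' a, v⟫ = ⟪f' (a + t • v) - f' a, v⟫ := by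
        rw [inner_sub_left]
      have hcs : ⟪f' (a + t • v) - f' a, v⟫ ≤ ‖f' (a + t • v) - f' a‖ * ‖v‖ :=
        real_inner_le_norm _ _
      have hl : ‖f' (a + t • v) - f' a‖ ≤ L * (t * ‖v‖) := by
        have := hLip (a + t • v) a
        simpa [norm_smul, abs_of_pos ht.1, mul_assoc] using this
      rw [hsub]
      nlinarith [norm_nonneg v, ht.1.le]
  have h10 := hanti (Set.mem_Icc.2 ⟨le_refl 0, zero_le_one⟩)
    (Set.mem_Icc.2 ⟨zero_le_one, le_refl 1⟩) zero_le_one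
  simp only [hψ, zero_smul, add_zero, one_pow, zero_pow, mul_zero, zero_mul, sub_zero,
    one_mul, mul_one] at h10
  rw [hay]
  linarith

theorem gradIneq' (hconv : ConvexOn ℝ Set.univ f) (hgrad : ∀ x, HasGradientAt f (f' x) x)
    (a u : Euc n) : f a + ⟪f' a, u - a⟫ ≤ f u := by
  set v := u - a with hv
  have hslope : ∀ t : ℝ, t ∈ Set.Ioo (0:ℝ) 1 → (f (a + t • v) - f a) / t ≤ f u - f a := by
    intro t ht
    have hc := hconv.2 (Set.mem_univ u) (Set.mem_univ a) (le_of_lt ht.1)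
      (by linarith [ht.2] : (0:ℝ) ≤ 1 - t) (by ring)
    have : a + t • v = t • u + (1 - t) • a := by
      simp [hv, smul_sub, sub_smul]; abel
    rw [this]
    rw [div_le_iff₀ ht.1]
    simp only [smul_eq_mul] at hc
    calc f (t • u + (1 - t) • a) - f a ≤ t * f u + (1 - t) * f a - f a := by linarith [hc]
      _ = (f u - f a) * t := by ring
  have hder : HasDerivAt (fun t : ℝ => f (a + t • v)) ⟪f' a, v⟫ 0 := by
    simpa using dirDeriv' hgrad a v 0
  have htend : Filter.Tendsto (slope (fun t : ℝ => f (a + t • v)) 0) (nhdsWithin 0 (Set.Ioi 0))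
      (nhds ⟪f' a, v⟫) := by
    have h := hasDerivAt_iff_tendsto_slope.1 hder
    exact h.mono_left (nhdsWithin_mono 0 (fun t ht => ne_of_gt ht))
  have hle : ⟪f' a, v⟫ ≤ f u - f a := by
    refine le_of_tendsto htend ?_
    filter_upwards [Ioo_mem_nhdsGT_of_mem (Set.mem_Ico.2 ⟨le_refl 0, zero_lt_one⟩)] with t ht
    have := hslope t ht
    simpa [slope_def_field, slope, hv, div_eq_inv_mul] using this
  have : f (a + (1:ℝ) • v) = f u := by simp [hv]
  linarith [hle]

end helpers

set_option maxHeartbeats 1000000 in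
theorem stmt_6 {n : ℕ} (L γ : ℝ) (hL : 0 < L) (hγ : γ ≥ L)
    (f : Euc n → ℝ) (f' : Euc n → Euc n) (g : Euc n → EReal)
    (hconv : ConvexOn ℝ Set.univ f)
    (hgrad : ∀ x, HasGradientAt f (f' x) x)
    (hLip : ∀ x y, ‖f' x - f' y‖ ≤ L * ‖x - y‖)
    (hgbot : ∀ x, g x ≠ ⊥) (hgtop : ∃ x, g x ≠ ⊤)
    (hglsc : LowerSemicontinuous g)
    (hgconv : ∀ x y : Euc n, ∀ a b : ℝ, 0 ≤ a → 0 ≤ b → a + b = 1 →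
      g (a • x + b • y) ≤ (a : EReal) * g x + (b : EReal) * g y)
    (p : Euc n → Euc n)
    (hp : ∀ xb x, ((f xb + ⟪f' xb, p xb - xb⟫ + γ / 2 * ‖p xb - xb‖ ^ 2 : ℝ) : EReal) + g (p xb)
        ≤ ((f xb + ⟪f' xb, x - xb⟫ + γ / 2 * ‖x - xb‖ ^ 2 : ℝ) : EReal) + g x)
    (X : Set (Euc n))
    (hX : X = {x | ∀ y, (f x : EReal) + g x ≤ (f y : EReal) + g y})
    (hne : X.Nonempty)
    (xs : Euc n) (hxs : xs ∈ X)
    (fstar : ℝ) (hstar : (f xs : EReal) + g xs = (fstar : ℝ))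
    (τ ω : ℝ) (hτ : 0 < τ) (hω : 0 < ω)
    (heQG : ∀ y, (f y : EReal) + g y ≤ ((fstar + ω : ℝ) : EReal) →
      ((fstar + τ / 2 * (Metric.infDist y X) ^ 2 : ℝ) : EReal) ≤ (f y : EReal) + g y)
    (x : ℕ → Euc n)
    (hiter : ∀ k, x (k + 1) = x k - (1 / γ) • (γ • (x k - p (x k)))) :
    ∃ m : ℕ, ∀ k ≥ m,
      Metric.infDist (x (k + 1)) X ≤ Real.sqrt (γ / (γ + τ)) * Metric.infDist (x k) X := by
  have hγ0 : 0 < γ := lt_of_lt_of_le hL hγ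
  have hxp : ∀ k, x (k + 1) = p (x k) := by
    intro k
    rw [hiter k, smul_smul, one_div, inv_mul_cancel₀ (ne_of_gt hγ0), one_smul]
    abel
  have hxsmin := hxs
  rw [hX] at hxsmin
  have hmin : ∀ y, (fstar : EReal) ≤ (f y : EReal) + g y := by
    intro y; rw [← hstar]; exact hxsmin y
  have hgxs : g xs = ((fstar - f xs : ℝ) : EReal) := coe_add_eq_coe' (hgbot xs) hstar
  -- g (p xb) is finite
  have hgp : ∀ xb, g (p xb) = (((g (p xb)).toReal : ℝ) : EReal) := by
    intro xb
    have h := hp xb xs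
    rw [hgxs, ← EReal.coe_add] at h
    have h2 := coe_add_le_coe' (hgbot (p xb)) h
    exact (EReal.coe_toReal h2.1 (hgbot (p xb))).symm
  -- key inequality
  have hstar2 : ∀ xb u : Euc n, ∀ b : ℝ, g u = (b : EReal) →
      f (p xb) + (g (p xb)).toReal
        ≤ (f u + b) + γ / 2 * (‖u - xb‖ ^ 2 - ‖u - p xb‖ ^ 2) := by
    intro xb u b hb
    have hstrong : (f xb + ⟪f' xb, p xb - xb⟫ + γ / 2 * ‖p xb - xb‖ ^ 2 + (g (p xb)).toReal)
        + γ / 2 * ‖u - p xb‖ ^ 2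
        ≤ (f xb + ⟪f' xb, u - xb⟫ + γ / 2 * ‖u - xb‖ ^ 2) + b := by
      apply lim01'
      intro t ht
      set z := (1 - t) • p xb + t • u with hzdef
      have hgz : g z ≤ (((1 - t) * (g (p xb)).toReal + t * b : ℝ) : EReal) := by
        have h := hgconv (p xb) u (1 - t) t (by linarith [ht.2]) ht.1.le (by ring)
        rw [hgp xb, hb, ← EReal.coe_mul, ← EReal.coe_mul, ← EReal.coe_add] at h
        exact h
      obtain ⟨hgztop, hgzR⟩ := le_coe_toReal' (hgbot z) hgz
      have hz2 := hp xb z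
      have hzz : g z = (((g z).toReal : ℝ) : EReal) := (EReal.coe_toReal hgztop (hgbot z)).symm
      rw [hgp xb, hzz, ← EReal.coe_add, ← EReal.coe_add] at hz2
      have hz3 : f xb + ⟪f' xb, p xb - xb⟫ + γ / 2 * ‖p xb - xb‖ ^ 2 + (g (p xb)).toReal
          ≤ f xb + ⟪f' xb, z - xb⟫ + γ / 2 * ‖z - xb‖ ^ 2 + (g z).toReal := by
        exact_mod_cast hz2
      have hzx : z - xb = (1 - t) • (p xb - xb) + t • (u - xb) := by
        simp only [hzdef, smul_sub, sub_smul, one_smul]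
        abel
      have hn := normsq_combo' (p xb - xb) (u - xb) t
      have hup : (u - xb) - (p xb - xb) = u - p xb := by abel
      rw [hup] at hn
      have hinner : ⟪f' xb, z - xb⟫
          = (1 - t) * ⟪f' xb, p xb - xb⟫ + t * ⟪f' xb, u - xb⟫ := by
        rw [hzx, inner_add_right, real_inner_smul_right, real_inner_smul_right]
      have hnormz : ‖z - xb‖ ^ 2
          = (1 - t) * ‖p xb - xb‖ ^ 2 + t * ‖u - xb‖ ^ 2 - t * (1 - t) * ‖u - p xb‖ ^ 2 := by
        rw [hzx]; exact hn
      rw [hinner, hnormz] at hz3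
      have hdiv : t * ((f xb + ⟪f' xb, p xb - xb⟫ + γ / 2 * ‖p xb - xb‖ ^ 2
            + (g (p xb)).toReal) + γ / 2 * ‖u - p xb‖ ^ 2 * (1 - t))
          ≤ t * ((f xb + ⟪f' xb, u - xb⟫ + γ / 2 * ‖u - xb‖ ^ 2) + b) := by
        nlinarith [hz3, hgzR, ht.1.le]
      exact le_of_mul_le_mul_left hdiv ht.1
    have h1 := descent' L hgrad hLip xb (p xb)
    have h3 := gradIneq' hconv hgrad xb u
    nlinarith [sq_nonneg ‖p xb - xb‖, hγ]
  -- the sequence of function values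
  obtain ⟨v, hvdef⟩ : ∃ v : ℕ → ℝ, v = fun k => f (x k) + (g (x k)).toReal := ⟨_, rfl⟩
  have hgx : ∀ k, g (x (k + 1)) = (((g (x (k + 1))).toReal : ℝ) : EReal) := by
    intro k; rw [hxp k]; exact hgp (x k)
  have hmono : ∀ k, v (k + 2) ≤ v (k + 1) := by
    intro k
    have h := hstar2 (x (k + 1)) (x (k + 1)) ((g (x (k + 1))).toReal) (hgx k)
    rw [← hxp (k + 1)] at h
    simp only [sub_self, norm_zero] at h
    simp only [hvdef]
    nlinarith [sq_nonneg ‖x (k + 1) - x (k + 2)‖, hγ0.le]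
  have htel : ∀ k, v (k + 1) ≤ fstar + γ / 2 * (‖xs - x k‖ ^ 2 - ‖xs - x (k + 1)‖ ^ 2) := by
    intro k
    have h := hstar2 (x k) xs (fstar - f xs) hgxs
    rw [← hxp k] at h
    simp only [hvdef]
    linarith
  have hsum : ∀ k : ℕ, (∑ j ∈ Finset.range k, v (j + 1)) + γ / 2 * ‖xs - x k‖ ^ 2
      ≤ k * fstar + γ / 2 * ‖xs - x 0‖ ^ 2 := by
    intro k
    induction k with
    | zero => simp
    | succ k ih =>
      rw [Finset.sum_range_succ]
      have h := htel k
      push_cast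
      push_cast at ih
      linarith
  have hanti : ∀ i j : ℕ, 1 ≤ i → i ≤ j → v j ≤ v i := by
    intro i j hi hij
    induction j, hij using Nat.le_induction with
    | base => exact le_refl _
    | succ jj hjj ih =>
      have h1 : v (jj + 1) ≤ v jj := by
        obtain ⟨j', rfl⟩ : ∃ j', jj = j' + 1 := ⟨jj - 1, by omega⟩
        exact hmono j'
      exact le_trans h1 ih
  have hbound : ∀ k : ℕ, 1 ≤ k → (k : ℝ) * v k ≤ k * fstar + γ / 2 * ‖xs - x 0‖ ^ 2 := by
    intro k hk
    have h1 : (k : ℝ) * v k ≤ ∑ j ∈ Finset.range k, v (j + 1) := by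
      have h2 := Finset.card_nsmul_le_sum (Finset.range k) (fun j => v (j + 1)) (v k)
        (fun j hj => hanti (j + 1) k (by omega) (by simpa using Finset.mem_range.1 hj))
      simpa [nsmul_eq_mul] using h2
    have h3 := hsum k
    linarith [h1, h3, mul_nonneg hγ0.le (sq_nonneg ‖xs - x k‖)]
  obtain ⟨N, hN⟩ := exists_nat_gt ((γ / 2 * ‖xs - x 0‖ ^ 2) / ω)
  refine ⟨N + 1, ?_⟩
  intro k hk
  have hk1 : 1 ≤ k := le_trans (Nat.le_add_left 1 N) hk
  have hkpos : (0 : ℝ) < k := by exact_mod_cast hk1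
  have hkN : (N : ℝ) ≤ (k : ℝ) := by
    have : N ≤ k := le_trans (Nat.le_succ N) hk
    exact_mod_cast this
  have hvk : v k ≤ fstar + ω := by
    have hb := hbound k hk1
    have hC : γ / 2 * ‖xs - x 0‖ ^ 2 < (k : ℝ) * ω := by
      have h5 := (div_lt_iff₀ hω).1 hN
      nlinarith
    have h4 : (k:ℝ) * v k ≤ (k:ℝ) * (fstar + ω) := by nlinarith [hb, hC]
    exact le_of_mul_le_mul_left h4 hkpos
  have hvk1 : v (k + 1) ≤ fstar + ω := by
    have h1 : v (k + 1) ≤ v k := by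
      obtain ⟨k', rfl⟩ : ∃ k', k = k' + 1 := ⟨k - 1, by omega⟩
      exact hmono k'
    linarith
  have hφ : (f (x (k + 1)) : EReal) + g (x (k + 1)) = ((v (k + 1) : ℝ) : EReal) := by
    rw [hgx k, ← EReal.coe_add]
    simp [hvdef]
  have hEQ : fstar + τ / 2 * (Metric.infDist (x (k + 1)) X) ^ 2 ≤ v (k + 1) := by
    have h2 := heQG (x (k + 1)) (by rw [hφ]; exact_mod_cast hvk1)
    rw [hφ] at h2
    exact_mod_cast h2
  set d := Metric.infDist (x k) X with hd
  set d' := Metric.infDist (x (k + 1)) X with hd'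
  have hd0 : 0 ≤ d := Metric.infDist_nonneg
  have hd'0 : 0 ≤ d' := Metric.infDist_nonneg
  have hkey2 : (γ + τ) * d' ^ 2 ≤ γ * d ^ 2 := by
    apply limeps'
    intro ε hε
    obtain ⟨u, huX, hud⟩ := (Metric.infDist_lt_iff hne).1 (show d < d + ε by linarith)
    have huprop := huX
    rw [hX] at huprop
    have huval : (f u : EReal) + g u = (fstar : EReal) := by
      refine le_antisymm ?_ (hmin u)
      rw [← hstar]; exact huprop xs
    have hgu : g u = ((fstar - f u : ℝ) : EReal) := coe_add_eq_coe' (hgbot u) huval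
    have h := hstar2 (x k) u (fstar - f u) hgu
    rw [← hxp k] at h
    have hnorm1 : ‖u - x k‖ < d + ε := by
      rw [← dist_eq_norm, dist_comm]
      exact hud
    have hnorm2 : d' ≤ ‖u - x (k + 1)‖ := by
      rw [norm_sub_rev, ← dist_eq_norm]
      exact Metric.infDist_le_dist_of_mem huX
    have hp1 : ‖u - x k‖ ^ 2 ≤ (d + ε) ^ 2 :=
      pow_le_pow_left₀ (norm_nonneg _) hnorm1.le 2
    have hp2 : d' ^ 2 ≤ ‖u - x (k + 1)‖ ^ 2 := pow_le_pow_left₀ hd'0 hnorm2 2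
    have hB : v (k + 1) ≤ fstar + γ / 2 * (‖u - x k‖ ^ 2 - ‖u - x (k + 1)‖ ^ 2) := by
      simp only [hvdef]
      linarith [h]
    linarith [hEQ, hB,
      mul_le_mul_of_nonneg_left hp1 (by positivity : (0:ℝ) ≤ γ / 2),
      mul_le_mul_of_nonneg_left hp2 (by positivity : (0:ℝ) ≤ γ / 2)]
  have h1 : d' ^ 2 ≤ γ / (γ + τ) * d ^ 2 := by
    rw [div_mul_eq_mul_div, le_div_iff₀ (by linarith : (0 : ℝ) < γ + τ)]
    nlinarith [hkey2]
  calc d' = Real.sqrt (d' ^ 2) := (Real.sqrt_sq hd'0).symm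
    _ ≤ Real.sqrt (γ / (γ + τ) * d ^ 2) := Real.sqrt_le_sqrt h1
    _ = Real.sqrt (γ / (γ + τ)) * d := by
        rw [Real.sqrt_mul (div_nonneg hγ0.le (by linarith)), Real.sqrt_sq hd0]
end

section
/- Let f(x) = g(Ex) with g μ-strongly convex differentiable with L-Lipschitz gradient, Q a closed convex set, and γ ≥ L‖EEᵀ‖. Then for any x̄ and all x ∈ Q: f(x) ≥ f(x_Q(x̄;γ)) + ⟨G(x̄), x − x̄⟩ + (1/(2γ))‖G(x̄)‖² + (μ/2)‖Ex − Ex̄‖², where x_Q(x̄;γ) = argmin_{x∈Q}[f(x̄) + ⟨∇f(x̄), x − x̄⟩ + (γ/2)‖x − x̄‖²] and G(x̄) = γ(x̄ − x_Q(x̄;γ)). -/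
open RealInnerProductSpace Metric Set Filter

open Topology

lemma line_deriv_s10 {m : ℕ} (g : Euc m → ℝ) (g' : Euc m → Euc m)
    (hgrad : ∀ u, HasGradientAt g (g' u) u) (v w : Euc m) (t : ℝ) :
    HasDerivAt (fun s : ℝ => g (v + s • w)) ⟪g' (v + t • w), w⟫ t := by
  have hline : HasDerivAt (fun s : ℝ => v + s • w) w t := by
    simpa using ((hasDerivAt_id t).smul_const w).const_add v
  have h := ((hgrad (v + t • w)).hasFDerivAt).comp_hasDerivAt t hline
  simpa [InnerProductSpace.toDual_apply_apply, Function.comp_def] using h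

lemma sc_lower {m : ℕ} (μ : ℝ) (hμ : 0 < μ) (g : Euc m → ℝ) (g' : Euc m → Euc m)
    (hgrad : ∀ u, HasGradientAt g (g' u) u)
    (hSC : ∀ u v, ⟪g' u - g' v, u - v⟫ ≥ μ * ‖u - v‖ ^ 2) (u v : Euc m) :
    g u ≥ g v + ⟪g' v, u - v⟫ + μ / 2 * ‖u - v‖ ^ 2 := by
  set w := u - v with hw
  set h : ℝ → ℝ := fun t => g (v + t • w) - t * ⟪g' v, w⟫ - μ / 2 * t ^ 2 * ‖w‖ ^ 2 with hh
  have hderiv : ∀ t : ℝ, HasDerivAt h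
      (⟪g' (v + t • w), w⟫ - ⟪g' v, w⟫ - μ * t * ‖w‖ ^ 2) t := by
    intro t
    have h1 := line_deriv_s10 g g' hgrad v w t
    have h2 : HasDerivAt (fun t : ℝ => t * ⟪g' v, w⟫) ⟪g' v, w⟫ t := by
      simpa using (hasDerivAt_id t).mul_const ⟪g' v, w⟫
    have h3 : HasDerivAt (fun t : ℝ => μ / 2 * t ^ 2 * ‖w‖ ^ 2)
        (μ * t * ‖w‖ ^ 2) t := by
      have := ((hasDerivAt_pow 2 t).const_mul (μ / 2)).mul_const (‖w‖ ^ 2)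
      exact this.congr_deriv (by ring)
    exact (h1.sub h2).sub h3
  have hmono : MonotoneOn h (Icc (0:ℝ) 1) := by
    apply monotoneOn_of_deriv_nonneg (convex_Icc 0 1)
    · exact fun t _ => ((hderiv t).continuousAt).continuousWithinAt
    · exact fun t _ => ((hderiv t).differentiableAt).differentiableWithinAt
    · intro t ht
      rw [interior_Icc] at ht
      rw [(hderiv t).deriv]
      have key := hSC (v + t • w) v
      have he : v + t • w - v = t • w := by abel
      rw [he, norm_smul] at key
      have habs : |t| = t := abs_of_pos ht.1
      rw [Real.norm_eq_abs, habs] at key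
      have : t * ⟪g' (v + t • w) - g' v, w⟫ ≥ t * (μ * t * ‖w‖ ^ 2) := by
        calc t * ⟪g' (v + t • w) - g' v, w⟫ = ⟪g' (v + t • w) - g' v, t • w⟫ := by
              rw [real_inner_smul_right]
          _ ≥ μ * (t * ‖w‖) ^ 2 := key
          _ = t * (μ * t * ‖w‖ ^ 2) := by ring
      have h4 : ⟪g' (v + t • w) - g' v, w⟫ ≥ μ * t * ‖w‖ ^ 2 :=
        le_of_mul_le_mul_left this ht.1
      rw [inner_sub_left] at h4
      linarith
  have h01 := hmono (by norm_num : (0:ℝ) ∈ Icc (0:ℝ) 1) (by norm_num : (1:ℝ) ∈ Icc (0:ℝ) 1)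
    (by norm_num)
  simp only [hh, zero_smul, add_zero, one_smul] at h01
  have hvw : v + w = u := by rw [hw]; abel
  rw [hvw] at h01
  -- h01 : g v - 0 * ... - ... ≤ g u - 1 * ... - ...
  simp only [zero_mul, zero_pow, mul_zero, sub_zero, one_mul, one_pow, mul_one] at h01
  linarith

lemma descent {m : ℕ} (L : ℝ) (hL : 0 < L) (g : Euc m → ℝ) (g' : Euc m → Euc m)
    (hgrad : ∀ u, HasGradientAt g (g' u) u)
    (hLip : ∀ u v, ‖g' u - g' v‖ ≤ L * ‖u - v‖) (u v : Euc m) :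
    g u ≤ g v + ⟪g' v, u - v⟫ + L / 2 * ‖u - v‖ ^ 2 := by
  set w := u - v with hw
  set h : ℝ → ℝ := fun t => g (v + t • w) - t * ⟪g' v, w⟫ - L / 2 * t ^ 2 * ‖w‖ ^ 2 with hh
  have hderiv : ∀ t : ℝ, HasDerivAt h
      (⟪g' (v + t • w), w⟫ - ⟪g' v, w⟫ - L * t * ‖w‖ ^ 2) t := by
    intro t
    have h1 := line_deriv_s10 g g' hgrad v w t
    have h2 : HasDerivAt (fun t : ℝ => t * ⟪g' v, w⟫) ⟪g' v, w⟫ t := by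
      simpa using (hasDerivAt_id t).mul_const ⟪g' v, w⟫
    have h3 : HasDerivAt (fun t : ℝ => L / 2 * t ^ 2 * ‖w‖ ^ 2)
        (L * t * ‖w‖ ^ 2) t := by
      have := ((hasDerivAt_pow 2 t).const_mul (L / 2)).mul_const (‖w‖ ^ 2)
      exact this.congr_deriv (by ring)
    exact (h1.sub h2).sub h3
  have hanti : AntitoneOn h (Icc (0:ℝ) 1) := by
    apply antitoneOn_of_deriv_nonpos (convex_Icc 0 1)
    · exact fun t _ => ((hderiv t).continuousAt).continuousWithinAt
    · exact fun t _ => ((hderiv t).differentiableAt).differentiableWithinAt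
    · intro t ht
      rw [interior_Icc] at ht
      rw [(hderiv t).deriv]
      have key : ⟪g' (v + t • w) - g' v, w⟫ ≤ L * t * ‖w‖ ^ 2 := by
        calc ⟪g' (v + t • w) - g' v, w⟫ ≤ ‖g' (v + t • w) - g' v‖ * ‖w‖ :=
              real_inner_le_norm _ _
          _ ≤ L * ‖v + t • w - v‖ * ‖w‖ := by
              have := hLip (v + t • w) v
              have hn : (0:ℝ) ≤ ‖w‖ := norm_nonneg _
              nlinarith [norm_nonneg (g' (v + t • w) - g' v)]
          _ = L * t * ‖w‖ ^ 2 := by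
              have he : v + t • w - v = t • w := by abel
              rw [he, norm_smul, Real.norm_eq_abs, abs_of_pos ht.1]; ring
      rw [inner_sub_left] at key
      linarith
  have h01 := hanti (by norm_num : (0:ℝ) ∈ Icc (0:ℝ) 1) (by norm_num : (1:ℝ) ∈ Icc (0:ℝ) 1)
    (by norm_num)
  simp only [hh, zero_smul, add_zero, one_smul] at h01
  have hvw : v + w = u := by rw [hw]; abel
  rw [hvw] at h01
  simp only [zero_mul, zero_pow, mul_zero, sub_zero, one_mul, one_pow, mul_one] at h01
  linarith

lemma aux_norm {n m : ℕ} (L γ : ℝ) (hL : 0 < L) (A : Euc n →L[ℝ] Euc m)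
    (hγ : γ ≥ L * ‖A.comp (ContinuousLinearMap.adjoint A)‖) (p xb : Euc n) :
    L / 2 * ‖A p - A xb‖ ^ 2 ≤ γ / 2 * ‖p - xb‖ ^ 2 := by
  have h1 : ‖A p - A xb‖ = ‖A (p - xb)‖ := by rw [map_sub]
  have h2 : ‖A (p - xb)‖ ≤ ‖A‖ * ‖p - xb‖ := A.le_opNorm _
  have h3 : ‖A.comp (ContinuousLinearMap.adjoint A)‖ = ‖A‖ * ‖A‖ := by
    have hkey := ContinuousLinearMap.norm_adjoint_comp_self (ContinuousLinearMap.adjoint A)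
    rw [ContinuousLinearMap.adjoint_adjoint] at hkey
    have hnn : ‖ContinuousLinearMap.adjoint A‖ = ‖A‖ :=
      LinearIsometryEquiv.norm_map ContinuousLinearMap.adjoint A
    rw [hkey, hnn]
  have h4 : L * (‖A‖ * ‖A‖) ≤ γ := by rw [← h3]; exact hγ
  rw [h1]
  nlinarith [norm_nonneg (A (p - xb)), norm_nonneg (p - xb), norm_nonneg A,
    mul_le_mul_of_nonneg_left h2 (le_of_lt hL)]

theorem stmt_10 {n m : ℕ} (μ L γ : ℝ) (hμ : 0 < μ) (hL : 0 < L)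
    (g : Euc m → ℝ) (g' : Euc m → Euc m)
    (hgrad : ∀ u, HasGradientAt g (g' u) u)
    (hSC : ∀ u v, ⟪g' u - g' v, u - v⟫ ≥ μ * ‖u - v‖ ^ 2)
    (hLip : ∀ u v, ‖g' u - g' v‖ ≤ L * ‖u - v‖)
    (A : Euc n →L[ℝ] Euc m)
    (hγ : γ ≥ L * ‖A.comp (ContinuousLinearMap.adjoint A)‖)
    (Q : Set (Euc n)) (hQc : IsClosed Q) (hQconv : Convex ℝ Q) (hQne : Q.Nonempty)
    (xQ : Euc n → Euc n)
    (hxQ : ∀ xb, xQ xb ∈ Q ∧ ∀ x ∈ Q,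
      g (A xb) + ⟪ContinuousLinearMap.adjoint A (g' (A xb)), xQ xb - xb⟫ + γ / 2 * ‖xQ xb - xb‖ ^ 2
        ≤ g (A xb) + ⟪ContinuousLinearMap.adjoint A (g' (A xb)), x - xb⟫ + γ / 2 * ‖x - xb‖ ^ 2) :
    ∀ xb, ∀ x ∈ Q,
      g (A x) ≥ g (A (xQ xb)) + ⟪γ • (xb - xQ xb), x - xb⟫
        + 1 / (2 * γ) * ‖γ • (xb - xQ xb)‖ ^ 2 + μ / 2 * ‖A x - A xb‖ ^ 2 := by
  intro xb x hx
  have hγ0 : 0 ≤ γ := le_trans (by positivity) hγ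
  set p := xQ xb with hp
  set a := ContinuousLinearMap.adjoint A (g' (A xb)) with ha
  -- variational inequality
  have hVI : 0 ≤ ⟪a, x - p⟫ + γ * ⟪p - xb, x - p⟫ := by
    set c := ⟪a, x - p⟫ + γ * ⟪p - xb, x - p⟫ with hc
    have hbound : ∀ t ∈ Ioo (0:ℝ) 1, -(γ * t / 2 * ‖x - p‖ ^ 2) ≤ c := by
      intro t ht
      have hz : p + t • (x - p) ∈ Q := by
        have h' : (1 - t) • p + t • x ∈ Q := hQconv (hxQ xb).1 hx
          (by linarith [ht.2] : (0:ℝ) ≤ 1 - t) (le_of_lt ht.1) (by ring)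
        have he : p + t • (x - p) = (1 - t) • p + t • x := by
          rw [smul_sub, sub_smul, one_smul]; abel
        rw [he]; exact h'
      have hmin := (hxQ xb).2 _ hz
      have hzxb : p + t • (x - p) - xb = (p - xb) + t • (x - p) := by abel
      rw [hzxb] at hmin
      rw [inner_add_right, real_inner_smul_right] at hmin
      rw [norm_add_sq_real] at hmin
      rw [real_inner_smul_right, norm_smul, Real.norm_eq_abs, abs_of_pos ht.1] at hmin
      have ht0 := ht.1
      have : 0 ≤ t * c + γ / 2 * t ^ 2 * ‖x - p‖ ^ 2 := by
        simp only [hc]; nlinarith [hmin]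
      have h2 : -(γ * t / 2 * ‖x - p‖ ^ 2) * t ≤ c * t := by nlinarith
      exact le_of_mul_le_mul_right h2 ht0
    have htend : Tendsto (fun t : ℝ => -(γ * t / 2 * ‖x - p‖ ^ 2)) (𝓝[>] 0) (𝓝 0) := by
      have hcont : Continuous (fun t : ℝ => -(γ * t / 2 * ‖x - p‖ ^ 2)) := by fun_prop
      have h' := hcont.tendsto 0
      simp only [mul_zero, zero_mul, zero_div, neg_zero] at h'
      exact h'.mono_left nhdsWithin_le_nhds
    refine le_of_tendsto htend ?_
    filter_upwards [Ioo_mem_nhdsGT_of_mem (by norm_num : (0:ℝ) ∈ Ico (0:ℝ) 1)] with t ht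
    exact hbound t ht
  -- strong convexity lower bound
  have hS1 := sc_lower μ hμ g g' hgrad hSC (A x) (A xb)
  have hinner1 : ⟪g' (A xb), A x - A xb⟫ = ⟪a, x - xb⟫ := by
    rw [ha, ContinuousLinearMap.adjoint_inner_left, map_sub]
  rw [hinner1] at hS1
  -- descent lemma
  have hS2 := descent L hL g g' hgrad hLip (A p) (A xb)
  have hinner2 : ⟪g' (A xb), A p - A xb⟫ = ⟪a, p - xb⟫ := by
    rw [ha, ContinuousLinearMap.adjoint_inner_left, map_sub]
  rw [hinner2] at hS2
  have hAnorm : L / 2 * ‖A p - A xb‖ ^ 2 ≤ γ / 2 * ‖p - xb‖ ^ 2 :=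
    aux_norm L γ hL A hγ p xb
  -- split inner products
  have hsplit1 : ⟪a, x - xb⟫ = ⟪a, x - p⟫ + ⟪a, p - xb⟫ := by
    rw [← inner_add_right]; congr 1; abel
  have hsplit2 : ⟪γ • (xb - p), x - xb⟫
      = γ * (-⟪p - xb, x - p⟫) - γ * ‖p - xb‖ ^ 2 := by
    rw [real_inner_smul_left]
    have : (xb - p : Euc n) = -(p - xb) := by abel
    rw [this, inner_neg_left]
    have hx2 : (x - xb : Euc n) = (x - p) + (p - xb) := by abel
    rw [hx2, inner_add_right, real_inner_self_eq_norm_sq]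
    ring
  have hsplit3 : 1 / (2 * γ) * ‖γ • (xb - p)‖ ^ 2 = γ / 2 * ‖p - xb‖ ^ 2 := by
    rw [norm_smul, Real.norm_eq_abs, abs_of_nonneg hγ0, norm_sub_rev]
    rcases eq_or_lt_of_le hγ0 with h | h
    · rw [← h]; ring
    · field_simp
  rw [hsplit2, hsplit3]
  linarith [hS1, hS2, hVI, hsplit1]
end

section
/- Let f(x) = g(Ex) with g strongly convex and differentiable, Q = {x : Ax ≤ b} a polyhedral set, and 𝒳 = argmin_{x∈Q} f(x) nonempty. Then there exists a unique vector t* ∈ ℝᵐ such that Ex = t* for every x ∈ 𝒳; consequently 𝒳 = {x : Ex = t*} ∩ {x : Ax ≤ b}. -/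
open RealInnerProductSpace Metric Set Filter

theorem stmt_11 {n m k : ℕ} (μ : ℝ) (hμ : 0 < μ)
    (g : Euc m → ℝ) (g' : Euc m → Euc m)
    (hgrad : ∀ u, HasGradientAt g (g' u) u)
    (hSC : ∀ u v, ⟪g' u - g' v, u - v⟫ ≥ μ * ‖u - v‖ ^ 2)
    (A : Euc n →L[ℝ] Euc m)
    (a : Fin k → Euc n) (b : Fin k → ℝ)
    (Q : Set (Euc n)) (hQ : Q = {x | ∀ j, ⟪a j, x⟫ ≤ b j})
    (X : Set (Euc n)) (hX : X = {x ∈ Q | ∀ y ∈ Q, g (A x) ≤ g (A y)})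
    (hne : X.Nonempty) :
    ∃! t : Euc m, (∀ x ∈ X, A x = t) ∧ X = {x | A x = t} ∩ Q := by
  obtain ⟨x₀, hx₀⟩ := hne
  have hx₀X := hx₀
  rw [hX] at hx₀X
  obtain ⟨hx₀Q, hmin⟩ := hx₀X
  -- main claim
  have key : ∀ x ∈ X, A x = A x₀ := by
    intro x hx
    rw [hX] at hx
    obtain ⟨hxQ, hxmin⟩ := hx
    by_contra hne'
    set u := A x with hu
    set v := A x₀ with hv
    have hgeq : g u = g v := le_antisymm (hxmin x₀ hx₀Q) (hmin x hxQ)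
    have hseg : ∀ s ∈ Icc (0:ℝ) 1, (1 - s) • x₀ + s • x ∈ Q := by
      intro s hs
      rw [hQ]; intro j
      have h1 : ⟪a j, x₀⟫ ≤ b j := by rw [hQ] at hx₀Q; exact hx₀Q j
      have h2 : ⟪a j, x⟫ ≤ b j := by rw [hQ] at hxQ; exact hxQ j
      have heq : ⟪a j, (1 - s) • x₀ + s • x⟫ = (1-s) * ⟪a j, x₀⟫ + s * ⟪a j, x⟫ := by
        rw [inner_add_right, real_inner_smul_right, real_inner_smul_right]
      rw [heq]
      calc (1-s) * ⟪a j, x₀⟫ + s * ⟪a j, x⟫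
          ≤ (1-s) * b j + s * b j := by
            gcongr <;> [linarith [hs.2]; exact hs.1]
        _ = b j := by ring
    set w : ℝ → Euc m := fun s => v + s • (u - v) with hw
    have hwA : ∀ s : ℝ, w s = A ((1-s) • x₀ + s • x) := by
      intro s
      simp only [hw, map_add, map_smul, ← hu, ← hv]
      module
    set φ : ℝ → ℝ := fun s => g (w s) with hφdef
    set φd : ℝ → ℝ := fun s => ⟪g' (w s), u - v⟫ with hφd
    have hderiv : ∀ s : ℝ, HasDerivAt φ (φd s) s := by
      intro s
      have hw' : HasDerivAt w (u - v) s := by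
        have := ((hasDerivAt_id s).smul_const (u - v)).const_add v
        simpa [hw] using this
      have hF : HasFDerivAt g ((InnerProductSpace.toDual ℝ (Euc m)) (g' (w s))) (w s) :=
        hgrad (w s)
      have := hF.comp_hasDerivAt s hw'
      simp only [InnerProductSpace.toDual_apply_apply] at this
      exact this
    have hφ0 : φ 0 = g v := by simp [hφdef, hw]
    have hφ1 : φ 1 = g v := by
      have : w 1 = u := by simp [hw]
      rw [hφdef]; simp only [this]; exact hgeq
    have hφhalf : g v ≤ φ (1/2) := by
      show g v ≤ g (w (1/2))
      rw [hwA]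
      exact hmin _ (hseg (1/2) (by norm_num))
    -- MVT on both halves
    have hcont1 : ContinuousOn φ (Icc 0 (1/2)) :=
      fun s _ => (hderiv s).continuousAt.continuousWithinAt
    have hcont2 : ContinuousOn φ (Icc (1/2) 1) :=
      fun s _ => (hderiv s).continuousAt.continuousWithinAt
    obtain ⟨c, hc, hceq⟩ := exists_hasDerivAt_eq_slope φ φd (by norm_num : (0:ℝ) < 1/2)
      hcont1 (fun s _ => hderiv s)
    obtain ⟨c', hc', hc'eq⟩ := exists_hasDerivAt_eq_slope φ φd (by norm_num : (1:ℝ)/2 < 1)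
      hcont2 (fun s _ => hderiv s)
    have hφdc : 0 ≤ φd c := by
      rw [hceq]
      apply div_nonneg _ (by norm_num)
      rw [hφ0]; linarith
    have hφdc' : φd c' ≤ 0 := by
      rw [hc'eq]
      apply div_nonpos_of_nonpos_of_nonneg _ (by norm_num)
      rw [hφ1]; linarith
    -- strong monotonicity
    have hlt : c < c' := lt_trans hc.2 hc'.1
    have hSC' := hSC (w c') (w c)
    have hwdiff : w c' - w c = (c' - c) • (u - v) := by
      simp only [hw]; module
    have hnorm : ‖w c' - w c‖^2 = (c' - c)^2 * ‖u - v‖^2 := by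
      rw [hwdiff, norm_smul]
      rw [mul_pow, Real.norm_eq_abs, sq_abs]
    have hinner : ⟪g' (w c') - g' (w c), w c' - w c⟫ = (c' - c) * (φd c' - φd c) := by
      rw [hwdiff, real_inner_smul_right, inner_sub_left]
    have huv : (0:ℝ) < ‖u - v‖ := by
      rw [norm_pos_iff, sub_ne_zero]
      exact fun h => hne' h
    have hposc : 0 < c' - c := by linarith
    have : (c' - c) * (φd c' - φd c) ≥ μ * ((c' - c)^2 * ‖u - v‖^2) := by
      rw [← hnorm, ← hinner]; exact hSC'
    nlinarith [sq_nonneg (‖u - v‖), mul_pos hμ (mul_pos (mul_pos hposc hposc) (mul_pos huv huv))]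
  -- conclude
  refine ⟨A x₀, ⟨key, ?_⟩, ?_⟩
  · ext z
    constructor
    · intro hz
      refine ⟨key z hz, ?_⟩
      rw [hX] at hz; exact hz.1
    · rintro ⟨hzt, hzQ⟩
      rw [hX]
      refine ⟨hzQ, fun y hy => ?_⟩
      have : A z = A x₀ := hzt
      rw [this]
      exact hmin y hy
  · rintro t ⟨ht, -⟩
    exact (ht x₀ hx₀).symm
end

section
/- Consider minimizing f(x) = g(Ex) over the polyhedron Q = {x : Ax ≤ b}, where g is μ-strongly convex with L-Lipschitz gradient, 𝒳 = argmin_{x∈Q} f is nonempty, and γ ≥ L‖EEᵀ‖. Then there exists C₁ > 0 (depending on E, A, μ) such that the strengthened restricted strong convexity property holds: ⟨G(y), y − proj_𝒳(y)⟩ ≥ (1/(2γ))‖G(y)‖² + C₁·d²(y, 𝒳) for all y ∈ Q, where G(y) = γ(y − x_Q(y;γ)) is the gradient mapping of f on Q. -/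
open RealInnerProductSpace Metric Set Filter

lemma lineDeriv' {m : ℕ} (g : Euc m → ℝ) (g' : Euc m → Euc m)
    (hgrad : ∀ u, HasGradientAt g (g' u) u) (v w : Euc m) (s : ℝ) :
    HasDerivAt (fun t : ℝ => g (v + t • w)) ⟪g' (v + s • w), w⟫ s := by
  have hc : HasDerivAt (fun t : ℝ => v + t • w) w s := by
    simpa using ((hasDerivAt_id s).smul_const w).const_add v
  have := (hgrad (v + s • w)).hasFDerivAt.comp_hasDerivAt s hc
  simpa [InnerProductSpace.toDual_apply_apply, Function.comp_def] using this

lemma seg_lower {m : ℕ} (g : Euc m → ℝ) (g' : Euc m → Euc m)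
    (hgrad : ∀ u, HasGradientAt g (g' u) u) (v w : Euc m) (c : ℝ)
    (h : ∀ s : ℝ, s ∈ Set.Icc (0:ℝ) 1 → c * s ≤ ⟪g' (v + s • w) - g' v, w⟫) :
    g v + ⟪g' v, w⟫ + c / 2 ≤ g (v + w) := by
  set ψ : ℝ → ℝ := fun s => g (v + s • w) - s * ⟪g' v, w⟫ - c * s ^ 2 / 2 with hψdef
  have hψ : ∀ s : ℝ, HasDerivAt ψ (⟪g' (v + s • w), w⟫ - ⟪g' v, w⟫ - c * s) s := by
    intro s
    have h1 := lineDeriv' g g' hgrad v w s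
    have h2 : HasDerivAt (fun t : ℝ => t * ⟪g' v, w⟫) ⟪g' v, w⟫ s := by
      simpa using (hasDerivAt_id s).mul_const ⟪g' v, w⟫
    have h3 : HasDerivAt (fun t : ℝ => c * t ^ 2 / 2) (c * s) s := by
      have := ((hasDerivAt_pow 2 s).const_mul c).div_const 2
      refine this.congr_deriv ?_
      ring
    exact (h1.sub h2).sub h3
  have hmono : MonotoneOn ψ (Set.Icc (0:ℝ) 1) := by
    apply monotoneOn_of_deriv_nonneg (convex_Icc 0 1)
    · exact (Differentiable.continuous (fun s => (hψ s).differentiableAt)).continuousOn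
    · intro s _
      exact ((hψ s).differentiableAt).differentiableWithinAt
    · intro s hs
      rw [(hψ s).deriv]
      rw [interior_Icc] at hs
      have := h s ⟨hs.1.le, hs.2.le⟩
      rw [inner_sub_left] at this
      linarith
  have h01 := hmono (Set.left_mem_Icc.2 one_pos.le) (Set.right_mem_Icc.2 one_pos.le) one_pos.le
  have e0 : ψ 0 = g v := by simp [hψdef]
  have e1 : ψ 1 = g (v + w) - ⟪g' v, w⟫ - c / 2 := by simp [hψdef]
  rw [e0, e1] at h01
  linarith

lemma strong_lower {m : ℕ} (g : Euc m → ℝ) (g' : Euc m → Euc m) (μ : ℝ)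
    (hgrad : ∀ u, HasGradientAt g (g' u) u)
    (hSC : ∀ u v, ⟪g' u - g' v, u - v⟫ ≥ μ * ‖u - v‖ ^ 2) (u v : Euc m) :
    g v + ⟪g' v, u - v⟫ + μ / 2 * ‖u - v‖ ^ 2 ≤ g u := by
  set w := u - v with hw
  have key : ∀ s : ℝ, s ∈ Set.Icc (0:ℝ) 1 → (μ * ‖w‖ ^ 2) * s ≤ ⟪g' (v + s • w) - g' v, w⟫ := by
    intro s hs
    rcases eq_or_lt_of_le hs.1 with h0 | h0
    · simp [← h0]
    · have := hSC (v + s • w) v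
      have e : v + s • w - v = s • w := by abel
      rw [e, real_inner_smul_right, norm_smul] at this
      simp only [Real.norm_eq_abs, abs_of_pos h0] at this
      have : s * (μ * ‖w‖ ^ 2 * s) ≤ s * ⟪g' (v + s • w) - g' v, w⟫ := by nlinarith [this]
      exact le_of_mul_le_mul_left this h0
  have := seg_lower g g' hgrad v w (μ * ‖w‖ ^ 2) key
  have e : v + w = u := by rw [hw]; abel
  rw [e] at this
  linarith

lemma lip_upper {m : ℕ} (g : Euc m → ℝ) (g' : Euc m → Euc m) (L : ℝ)
    (hgrad : ∀ u, HasGradientAt g (g' u) u)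
    (hLip : ∀ u v, ‖g' u - g' v‖ ≤ L * ‖u - v‖) (u v : Euc m) :
    g u ≤ g v + ⟪g' v, u - v⟫ + L / 2 * ‖u - v‖ ^ 2 := by
  set w := u - v with hw
  have hgrad' : ∀ x, HasGradientAt (fun y => -g y) (-(g' x)) x := by
    intro x
    have := (hgrad x).hasFDerivAt.neg
    rw [hasFDerivAt_iff_hasGradientAt] at this
    simpa [Pi.neg_def] using this
  have key : ∀ s : ℝ, s ∈ Set.Icc (0:ℝ) 1 →
      (-(L * ‖w‖ ^ 2)) * s ≤ ⟪-(g' (v + s • w)) - -(g' v), w⟫ := by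
    intro s hs
    have e : -(g' (v + s • w)) - -(g' v) = -(g' (v + s • w) - g' v) := by abel
    rw [e, inner_neg_left]
    have h1 : ⟪g' (v + s • w) - g' v, w⟫ ≤ ‖g' (v + s • w) - g' v‖ * ‖w‖ :=
      real_inner_le_norm _ _
    have h2 := hLip (v + s • w) v
    have e2 : v + s • w - v = s • w := by abel
    rw [e2, norm_smul] at h2
    simp only [Real.norm_eq_abs, abs_of_nonneg hs.1] at h2
    nlinarith [norm_nonneg w, norm_nonneg (g' (v + s • w) - g' v)]
  have := seg_lower (fun y => -g y) (fun x => -(g' x)) hgrad' v w (-(L * ‖w‖ ^ 2)) key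
  have e : v + w = u := by rw [hw]; abel
  rw [e, inner_neg_left] at this
  linarith

lemma cone_bound {n m k : ℕ} (A : Euc n →L[ℝ] Euc m) (a : Fin k → Euc n) :
    ∃ c : ℝ, 0 < c ∧ ∀ (J : Finset (Fin k)) (v : Euc n),
      (∀ j ∈ J, ⟪a j, v⟫ ≤ 0) →
      (∀ u : Euc n, (∀ j ∈ J, ⟪a j, u⟫ ≤ 0) → A u = 0 → ⟪v, u⟫ ≤ 0) →
      c * ‖v‖ ≤ ‖A v‖ := by
  have key : ∀ J : Finset (Fin k), ∃ c : ℝ, 0 < c ∧ ∀ v : Euc n,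
      (∀ j ∈ J, ⟪a j, v⟫ ≤ 0) →
      (∀ u : Euc n, (∀ j ∈ J, ⟪a j, u⟫ ≤ 0) → A u = 0 → ⟪v, u⟫ ≤ 0) →
      c * ‖v‖ ≤ ‖A v‖ := by
    intro J
    set S : Set (Euc n) := {v | (∀ j ∈ J, ⟪a j, v⟫ ≤ 0) ∧
      ∀ u : Euc n, (∀ j ∈ J, ⟪a j, u⟫ ≤ 0) → A u = 0 → ⟪v, u⟫ ≤ 0} with hS
    have hSclosed : IsClosed S := by
      have : S = (⋂ j ∈ J, {v : Euc n | ⟪a j, v⟫ ≤ 0}) ∩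
          (⋂ u ∈ {u : Euc n | (∀ j ∈ J, ⟪a j, u⟫ ≤ 0) ∧ A u = 0},
            {v : Euc n | ⟪v, u⟫ ≤ 0}) := by
        ext v
        simp only [hS, Set.mem_setOf_eq, Set.mem_inter_iff, Set.mem_iInter]
        constructor
        · rintro ⟨h1, h2⟩; exact ⟨h1, fun u hu => h2 u hu.1 hu.2⟩
        · rintro ⟨h1, h2⟩; exact ⟨h1, fun u hu h0 => h2 u ⟨hu, h0⟩⟩
      rw [this]
      refine IsClosed.inter (isClosed_biInter fun j _ => ?_) (isClosed_biInter fun u _ => ?_)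
      · exact isClosed_le (Continuous.inner continuous_const continuous_id) continuous_const
      · exact isClosed_le (Continuous.inner continuous_id continuous_const) continuous_const
    have hScone : ∀ v ∈ S, ∀ t : ℝ, 0 ≤ t → t • v ∈ S := by
      rintro v ⟨h1, h2⟩ t ht
      refine ⟨fun j hj => ?_, fun u hu h0 => ?_⟩
      · rw [real_inner_smul_right]; exact mul_nonpos_of_nonneg_of_nonpos ht (h1 j hj)
      · rw [real_inner_smul_left]; exact mul_nonpos_of_nonneg_of_nonpos ht (h2 u hu h0)
    set T : Set (Euc n) := Metric.sphere 0 1 ∩ S with hT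
    have hTcomp : IsCompact T := (isCompact_sphere (0 : Euc n) 1).inter_right hSclosed
    rcases T.eq_empty_or_nonempty with hTe | hTne
    · refine ⟨1, one_pos, fun v hv1 hv2 => ?_⟩
      rcases eq_or_ne v 0 with rfl | hv0
      · simp
      · exfalso
        have hmem : (‖v‖⁻¹ • v) ∈ T := by
          constructor
          · simp [norm_smul, abs_of_nonneg (inv_nonneg.2 (norm_nonneg v)),
              inv_mul_cancel₀ (norm_ne_zero_iff.2 hv0)]
          · exact hScone v ⟨hv1, hv2⟩ _ (inv_nonneg.2 (norm_nonneg v))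
        rw [hTe] at hmem; exact hmem
    · obtain ⟨v₀, hv₀T, hv₀min⟩ := hTcomp.exists_isMinOn hTne
        (A.continuous.norm.continuousOn)
      have hv₀pos : 0 < ‖A v₀‖ := by
        rcases hv₀T with ⟨hv₀s, hv₀S⟩
        rcases (norm_nonneg (A v₀)).eq_or_lt with h0 | h0
        · exfalso
          have hA0 : A v₀ = 0 := norm_eq_zero.mp (by linarith)
          have := hv₀S.2 v₀ hv₀S.1 hA0
          have hv₀n : ‖v₀‖ = 1 := by simpa using hv₀s
          rw [real_inner_self_eq_norm_sq, hv₀n] at this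
          norm_num at this
        · exact h0
      refine ⟨‖A v₀‖, hv₀pos, fun v hv1 hv2 => ?_⟩
      rcases eq_or_ne v 0 with rfl | hv0
      · simp
      · have hmem : (‖v‖⁻¹ • v) ∈ T := by
          constructor
          · simp [norm_smul, abs_of_nonneg (inv_nonneg.2 (norm_nonneg v)),
              inv_mul_cancel₀ (norm_ne_zero_iff.2 hv0)]
          · exact hScone v ⟨hv1, hv2⟩ _ (inv_nonneg.2 (norm_nonneg v))
        have h5 : ‖A v₀‖ ≤ ‖A (‖v‖⁻¹ • v)‖ := hv₀min hmem
        rw [map_smul, norm_smul] at h5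
        simp only [Real.norm_eq_abs, abs_of_nonneg (inv_nonneg.2 (norm_nonneg v))] at h5
        have hvpos : 0 < ‖v‖ := norm_pos_iff.2 hv0
        calc ‖A v₀‖ * ‖v‖ ≤ (‖v‖⁻¹ * ‖A v‖) * ‖v‖ := by nlinarith
          _ = ‖A v‖ := by field_simp
  choose c hc1 hc2 using key
  have hne : (Finset.univ : Finset (Finset (Fin k))).Nonempty := ⟨∅, Finset.mem_univ _⟩
  refine ⟨Finset.univ.inf' hne c, ?_, fun J v hv1 hv2 => ?_⟩
  · rw [Finset.lt_inf'_iff]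
    exact fun J _ => hc1 J
  · calc Finset.univ.inf' hne c * ‖v‖ ≤ c J * ‖v‖ :=
        mul_le_mul_of_nonneg_right (Finset.inf'_le c (Finset.mem_univ J)) (norm_nonneg v)
      _ ≤ ‖A v‖ := hc2 J v hv1 hv2

set_option maxHeartbeats 1000000

theorem stmt_13 {n m k : ℕ} (μ L γ : ℝ) (hμ : 0 < μ) (hL : 0 < L)
    (g : Euc m → ℝ) (g' : Euc m → Euc m)
    (hgrad : ∀ u, HasGradientAt g (g' u) u)
    (hSC : ∀ u v, ⟪g' u - g' v, u - v⟫ ≥ μ * ‖u - v‖ ^ 2)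
    (hLip : ∀ u v, ‖g' u - g' v‖ ≤ L * ‖u - v‖)
    (A : Euc n →L[ℝ] Euc m)
    (hγ : γ ≥ L * ‖A.comp (ContinuousLinearMap.adjoint A)‖)
    (a : Fin k → Euc n) (b : Fin k → ℝ)
    (Q : Set (Euc n)) (hQ : Q = {x | ∀ j, ⟪a j, x⟫ ≤ b j})
    (X : Set (Euc n)) (hX : X = {x ∈ Q | ∀ y ∈ Q, g (A x) ≤ g (A y)})
    (hne : X.Nonempty)
    (xQ : Euc n → Euc n)
    (hxQ : ∀ xb, xQ xb ∈ Q ∧ ∀ x ∈ Q,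
      g (A xb) + ⟪ContinuousLinearMap.adjoint A (g' (A xb)), xQ xb - xb⟫ + γ / 2 * ‖xQ xb - xb‖ ^ 2
        ≤ g (A xb) + ⟪ContinuousLinearMap.adjoint A (g' (A xb)), x - xb⟫ + γ / 2 * ‖x - xb‖ ^ 2) :
    ∃ C₁ : ℝ, 0 < C₁ ∧ ∀ y ∈ Q, ∀ q ∈ X, dist y q = Metric.infDist y X →
      ⟪γ • (y - xQ y), y - q⟫ ≥ 1 / (2 * γ) * ‖γ • (y - xQ y)‖ ^ 2
        + C₁ * (Metric.infDist y X) ^ 2 := by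
  -- the norm identity ‖A ∘ A*‖ = ‖A‖²
  have hAA : ‖A.comp (ContinuousLinearMap.adjoint A)‖ = ‖A‖ * ‖A‖ := by
    have h1 := ContinuousLinearMap.norm_adjoint_comp_self (ContinuousLinearMap.adjoint A)
    rw [ContinuousLinearMap.adjoint_adjoint] at h1
    rw [h1, LinearIsometryEquiv.norm_map]
  have hγ0 : 0 ≤ γ := le_trans (by positivity) hγ
  -- convexity of Q
  have hQconv : Convex ℝ Q := by
    rw [hQ]
    intro p hp r hr α β hα hβ hαβ
    intro j
    have hp' := hp j
    have hr' := hr j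
    simp only [inner_add_right, real_inner_smul_right]
    have hb : α * b j + β * b j = b j := by rw [← add_mul, hαβ, one_mul]
    nlinarith [mul_le_mul_of_nonneg_left hp' hα, mul_le_mul_of_nonneg_left hr' hβ]
  rcases eq_or_lt_of_le hγ0 with hγz | hγpos
  · -- degenerate case γ = 0, hence A = 0
    have hA0 : A = 0 := by
      have h0 : ‖A.comp (ContinuousLinearMap.adjoint A)‖ ≤ 0 := by
        nlinarith
      have : ‖A‖ * ‖A‖ = 0 := le_antisymm (hAA ▸ h0) (by positivity)
      have : ‖A‖ = 0 := by nlinarith [norm_nonneg A]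
      exact norm_eq_zero.mp this
    refine ⟨1, one_pos, fun y hyQ q hqX hdist => ?_⟩
    have hyX : y ∈ X := by
      rw [hX]
      exact ⟨hyQ, fun z hz => by rw [hA0]; simp⟩
    have hd0 : Metric.infDist y X = 0 := by
      have h := Metric.infDist_le_dist_of_mem (x := y) hyX
      simp only [dist_self] at h
      exact le_antisymm h Metric.infDist_nonneg
    rw [← hγz, hd0]
    simp
  · -- main case γ > 0
    obtain ⟨c, hc, hcone⟩ := cone_bound A a
    refine ⟨μ * c ^ 2 / 2, by positivity, ?_⟩
    intro y hyQ q hqX hdist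
    have hqQ : q ∈ Q := by rw [hX] at hqX; exact hqX.1
    have hqmin : ∀ z ∈ Q, g (A q) ≤ g (A z) := by rw [hX] at hqX; exact hqX.2
    set x₀ := xQ y with hx₀
    have hx₀Q := (hxQ y).1
    have hmodel := (hxQ y).2
    set cvec := ContinuousLinearMap.adjoint A (g' (A y)) with hcvec
    -- variational inequality
    set I : ℝ := ⟪cvec, q - x₀⟫ + γ * ⟪x₀ - y, q - x₀⟫ with hI
    set K : ℝ := γ / 2 * ‖q - x₀‖ ^ 2 with hK
    have hK0 : 0 ≤ K := by positivity
    have main : ∀ s : ℝ, 0 < s → s ≤ 1 → 0 ≤ s * (I + s * K) := by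
      intro s hs0 hs1
      have hxs : x₀ + s • (q - x₀) ∈ Q := by
        have h := hQconv hx₀Q hqQ (by linarith : (0:ℝ) ≤ 1 - s) hs0.le (by ring)
        have e : (1 - s) • x₀ + s • q = x₀ + s • (q - x₀) := by module
        rwa [e] at h
      have h := hmodel _ hxs
      have e1 : x₀ + s • (q - x₀) - y = (x₀ - y) + s • (q - x₀) := by abel
      rw [e1, inner_add_right, real_inner_smul_right] at h
      have e2 : ‖(x₀ - y) + s • (q - x₀)‖ ^ 2
          = ‖x₀ - y‖ ^ 2 + 2 * (s * ⟪x₀ - y, q - x₀⟫) + s ^ 2 * ‖q - x₀‖ ^ 2 := by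
        rw [norm_add_sq_real, real_inner_smul_right, norm_smul]
        simp only [Real.norm_eq_abs]
        rw [mul_pow, sq_abs]
        all_goals ring
      rw [e2] at h
      have : 0 ≤ s * ⟪cvec, q - x₀⟫ + γ / 2 * (2 * (s * ⟪x₀ - y, q - x₀⟫)
          + s ^ 2 * ‖q - x₀‖ ^ 2) := by linarith
      rw [hI, hK]
      nlinarith [this]
    have VI : 0 ≤ I := by
      by_contra hneg
      push_neg at hneg
      set s : ℝ := min 1 (-I / (2 * K + 1)) with hs
      have hspos : 0 < s := lt_min one_pos (div_pos (by linarith) (by linarith))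
      have hs1 : s ≤ 1 := min_le_left _ _
      have hs2 : s ≤ -I / (2 * K + 1) := min_le_right _ _
      have hmain := main s hspos hs1
      have h2K : 0 < 2 * K + 1 := by linarith
      have hsK : s * (2 * K + 1) ≤ -I := by
        rw [div_eq_mul_inv] at hs2
        calc s * (2 * K + 1) ≤ (-I * (2 * K + 1)⁻¹) * (2 * K + 1) :=
          mul_le_mul_of_nonneg_right hs2 h2K.le
          _ = -I := by field_simp
      have hexp : s * (2 * K + 1) = 2 * (s * K) + s := by ring
      have h8 : I + s * K < 0 := by linarith
      nlinarith [mul_pos hspos (neg_pos.2 h8), hmain]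
    -- main chain of inequalities
    have h1 := strong_lower g g' μ hgrad hSC (A q) (A y)
    have h2 := lip_upper g g' L hgrad hLip (A x₀) (A y)
    have h4 := hqmin x₀ hx₀Q
    have h3 : L * ‖A x₀ - A y‖ ^ 2 ≤ γ * ‖x₀ - y‖ ^ 2 := by
      rw [← map_sub]
      have hA : ‖A (x₀ - y)‖ ≤ ‖A‖ * ‖x₀ - y‖ := A.le_opNorm _
      have hγ' : L * (‖A‖ * ‖A‖) ≤ γ := by rw [← hAA]; exact hγ
      nlinarith [norm_nonneg (A (x₀ - y)), norm_nonneg (x₀ - y), norm_nonneg A, hL.le,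
        mul_le_mul hA hA (norm_nonneg _) (by positivity)]
    have ha1 : ⟪g' (A y), A q - A y⟫ = ⟪cvec, q - y⟫ := by
      rw [← map_sub, hcvec, ContinuousLinearMap.adjoint_inner_left]
    have ha2 : ⟪g' (A y), A x₀ - A y⟫ = ⟪cvec, x₀ - y⟫ := by
      rw [← map_sub, hcvec, ContinuousLinearMap.adjoint_inner_left]
    rw [ha1] at h1
    rw [ha2] at h2
    have hIsplit : ⟪cvec, q - x₀⟫ = ⟪cvec, q - y⟫ - ⟪cvec, x₀ - y⟫ := by
      rw [← inner_sub_right]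
      congr 1
      abel
    -- distance bound via the cone lemma
    set J : Finset (Fin k) := Finset.univ.filter (fun j => b j ≤ ⟪a j, q⟫) with hJ
    have hyQ' : ∀ j, ⟪a j, y⟫ ≤ b j := by rw [hQ] at hyQ; exact hyQ
    have hqQ' : ∀ j, ⟪a j, q⟫ ≤ b j := by rw [hQ] at hqQ; exact hqQ
    have hcv1 : ∀ j ∈ J, ⟪a j, y - q⟫ ≤ 0 := by
      intro j hj
      rw [hJ, Finset.mem_filter] at hj
      rw [inner_sub_right]
      linarith [hyQ' j, hqQ' j, hj.2]
    have hcv2 : ∀ u : Euc n, (∀ j ∈ J, ⟪a j, u⟫ ≤ 0) → A u = 0 → ⟪y - q, u⟫ ≤ 0 := by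
      intro u hu hAu
      rcases eq_or_ne u 0 with rfl | hu0
      · simp
      -- find ε₀ > 0 with q + ε₀ • u ∈ Q
      have hslack : ∀ j, j ∉ J → ⟪a j, q⟫ < b j := by
        intro j hj
        rw [hJ, Finset.mem_filter] at hj
        push_neg at hj
        exact hj (Finset.mem_univ j)
      have hexists : ∃ ε₀ : ℝ, 0 < ε₀ ∧ q + ε₀ • u ∈ Q := by
        set F : Finset (Fin k) := Finset.univ.filter (fun j => 0 < ⟪a j, u⟫) with hF
        have hFJ : ∀ j ∈ F, j ∉ J := by
          intro j hj hjJ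
          rw [hF, Finset.mem_filter] at hj
          linarith [hu j hjJ, hj.2]
        by_cases hFne : F.Nonempty
        · set ε₀ : ℝ := F.inf' hFne (fun j => (b j - ⟪a j, q⟫) / ⟪a j, u⟫) with hε₀
          have hε₀pos : 0 < ε₀ := by
            rw [hε₀, Finset.lt_inf'_iff]
            intro j hj
            have hj' := hj
            rw [hF, Finset.mem_filter] at hj'
            exact div_pos (by linarith [hslack j (hFJ j hj)]) hj'.2
          refine ⟨ε₀, hε₀pos, ?_⟩
          rw [hQ]
          intro j
          rw [inner_add_right, real_inner_smul_right]
          by_cases hjF : j ∈ F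
          · have hle : ε₀ ≤ (b j - ⟪a j, q⟫) / ⟪a j, u⟫ := Finset.inf'_le _ hjF
            have hjpos : 0 < ⟪a j, u⟫ := by
              rw [hF, Finset.mem_filter] at hjF; exact hjF.2
            have := (le_div_iff₀ hjpos).mp hle
            linarith
          · have hjnp : ⟪a j, u⟫ ≤ 0 := by
              rw [hF, Finset.mem_filter] at hjF
              push_neg at hjF
              exact hjF (Finset.mem_univ j)
            have : ε₀ * ⟪a j, u⟫ ≤ 0 := mul_nonpos_of_nonneg_of_nonpos hε₀pos.le hjnp
            linarith [hqQ' j]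
        · refine ⟨1, one_pos, ?_⟩
          rw [hQ]
          intro j
          rw [inner_add_right, real_inner_smul_right]
          have hjnp : ⟪a j, u⟫ ≤ 0 := by
            by_contra hpos
            push_neg at hpos
            exact hFne ⟨j, by rw [hF, Finset.mem_filter]; exact ⟨Finset.mem_univ j, hpos⟩⟩
          linarith [hqQ' j]
      obtain ⟨ε₀, hε₀pos, hε₀Q⟩ := hexists
      -- all smaller ε also work, then X-membership and projection inequality
      have hkey : ∀ ε : ℝ, 0 < ε → ε ≤ ε₀ → ⟪y - q, u⟫ ≤ ε * ‖u‖ ^ 2 / 2 := by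
        intro ε hε hεle
        have hmemQ : q + ε • u ∈ Q := by
          have h := hQconv hqQ hε₀Q (by
            have := div_le_one_of_le₀ (le_of_lt (lt_of_lt_of_le hε hεle)) hε₀pos.le
            linarith [div_le_one_of_le₀ hεle hε₀pos.le] : (0:ℝ) ≤ 1 - ε / ε₀)
            (by positivity : (0:ℝ) ≤ ε / ε₀) (by ring)
          have e : (1 - ε / ε₀) • q + (ε / ε₀) • (q + ε₀ • u) = q + ε • u := by
            have : (ε / ε₀) * ε₀ = ε := div_mul_cancel₀ ε (ne_of_gt hε₀pos)
            rw [smul_add, smul_smul, this]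
            module
          rwa [e] at h
        have hmemX : q + ε • u ∈ X := by
          rw [hX]
          refine ⟨hmemQ, fun z hz => ?_⟩
          rw [map_add, map_smul, hAu, smul_zero, add_zero]
          exact hqmin z hz
        have hd : dist y q ≤ dist y (q + ε • u) := by
          rw [hdist]
          exact Metric.infDist_le_dist_of_mem hmemX
        rw [dist_eq_norm, dist_eq_norm] at hd
        have e : y - (q + ε • u) = (y - q) - ε • u := by abel
        rw [e] at hd
        have hsq : ‖y - q‖ ^ 2 ≤ ‖(y - q) - ε • u‖ ^ 2 := by
          nlinarith [norm_nonneg (y - q), norm_nonneg ((y - q) - ε • u)]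
        have hexp := norm_sub_sq_real (y - q) (ε • u)
        rw [real_inner_smul_right, norm_smul] at hexp
        simp only [Real.norm_eq_abs, abs_of_pos hε] at hexp
        rw [hexp] at hsq
        nlinarith [hsq]
      by_contra hpos
      push_neg at hpos
      have hun : 0 < ‖u‖ := norm_pos_iff.2 hu0
      set ε : ℝ := min ε₀ (⟪y - q, u⟫ / ‖u‖ ^ 2) with hε
      have hεpos : 0 < ε := lt_min hε₀pos (div_pos hpos (pow_pos hun 2))
      have hεle : ε ≤ ε₀ := min_le_left _ _
      have hεle2 : ε ≤ ⟪y - q, u⟫ / ‖u‖ ^ 2 := min_le_right _ _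
      have := hkey ε hεpos hεle
      have h6 : ε * ‖u‖ ^ 2 ≤ ⟪y - q, u⟫ := by
        have := (le_div_iff₀ (by positivity : (0:ℝ) < ‖u‖ ^ 2)).mp hεle2
        linarith
      nlinarith [hεpos, hun]
    have hD : c * ‖y - q‖ ≤ ‖A (y - q)‖ := hcone J (y - q) hcv1 hcv2
    have hDnorm : ‖A q - A y‖ = ‖A (y - q)‖ := by
      rw [← map_sub, ← norm_neg, ← map_neg]
      congr 1
      abel
    have hdq : ‖y - q‖ = Metric.infDist y X := by rw [← hdist, dist_eq_norm]
    -- final assembly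
    have hinner : ⟪γ • (y - x₀), y - q⟫ = γ * (‖y - x₀‖ ^ 2 + ⟪x₀ - y, q - x₀⟫) := by
      rw [real_inner_smul_left]
      congr 1
      have e : y - q = (y - x₀) - (q - x₀) := by abel
      rw [e, inner_sub_right, real_inner_self_eq_norm_sq]
      have e2 : ⟪y - x₀, q - x₀⟫ = -⟪x₀ - y, q - x₀⟫ := by
        rw [← inner_neg_left]
        congr 1
        abel
      rw [e2]
      ring
    have hnorm : 1 / (2 * γ) * ‖γ • (y - x₀)‖ ^ 2 = γ / 2 * ‖y - x₀‖ ^ 2 := by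
      rw [norm_smul]
      simp only [Real.norm_eq_abs, abs_of_pos hγpos]
      field_simp
    rw [ge_iff_le, hinner, hnorm]
    have hrev : ‖x₀ - y‖ = ‖y - x₀‖ := by rw [← norm_neg]; congr 1; abel
    rw [hrev] at h3
    have hDge : c * Metric.infDist y X ≤ ‖A q - A y‖ := by
      rw [hDnorm, ← hdq]; exact hD
    have hD2 : (c * Metric.infDist y X) ^ 2 ≤ ‖A q - A y‖ ^ 2 := by
      have h0 : 0 ≤ c * Metric.infDist y X := mul_nonneg hc.le Metric.infDist_nonneg
      nlinarith [hDge]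
    have VI2 : 0 ≤ (⟪cvec, q - y⟫ - ⟪cvec, x₀ - y⟫) + γ * ⟪x₀ - y, q - x₀⟫ := by
      have hVI := VI
      rw [hI, hIsplit] at hVI
      exact hVI
    have hstep1 : ⟪cvec, q - y⟫ + μ / 2 * ‖A q - A y‖ ^ 2
        ≤ ⟪cvec, x₀ - y⟫ + γ / 2 * ‖y - x₀‖ ^ 2 := by linarith
    have hD2' : c ^ 2 * Metric.infDist y X ^ 2 ≤ ‖A q - A y‖ ^ 2 := by
      have he : (c * Metric.infDist y X) ^ 2 = c ^ 2 * Metric.infDist y X ^ 2 := by ring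
      linarith [he ▸ hD2]
    have hfinal1 := mul_le_mul_of_nonneg_left hD2' (by positivity : (0:ℝ) ≤ μ / 2)
    linarith [VI2, hstep1, hfinal1]
end

section
/- Let f be convex differentiable with L-Lipschitz gradient, g closed convex, φ = f + g with nonempty minimizer set 𝒳, γ ≥ L, and let x_{k+1} = x_k − (1/γ)G(x_k) be the proximal gradient iterates. Then one has the one-step distance estimate: d²(x_{k+1}, 𝒳) ≤ d²(x_k, 𝒳) − (2/γ)(φ(x_{k+1}) − φ*). -/
open RealInnerProductSpace Metric Set Filter Topology

lemma real_le_of_forall_pos {a b : ℝ} (h : ∀ ε > 0, a ≤ b + ε) : a ≤ b := by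
  by_contra hc
  push_neg at hc
  linarith [h ((a - b) / 2) (by linarith)]

lemma hasDerivAt_line {n : ℕ} {f : Euc n → ℝ} {f' : Euc n → Euc n}
    (hgrad : ∀ z, HasGradientAt f (f' z) z) (x v : Euc n) (t : ℝ) :
    HasDerivAt (fun s : ℝ => f (x + s • v)) ⟪f' (x + t • v), v⟫ t := by
  have hc : HasDerivAt (fun s : ℝ => x + s • v) v t := by
    simpa using ((hasDerivAt_id t).smul_const v).const_add x
  have hf := (hgrad (x + t • v)).hasFDerivAt
  have h2 := hf.comp_hasDerivAt t hc
  simpa [InnerProductSpace.toDual_apply_apply, Function.comp_def] using h2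

lemma descent_aux {n : ℕ} {L : ℝ} {f : Euc n → ℝ} {f' : Euc n → Euc n}
    (hgrad : ∀ z, HasGradientAt f (f' z) z)
    (hLip : ∀ a b, ‖f' a - f' b‖ ≤ L * ‖a - b‖) (x y : Euc n) :
    f y ≤ f x + ⟪f' x, y - x⟫ + L / 2 * ‖y - x‖ ^ 2 := by
  set v := y - x with hv
  set k : ℝ → ℝ := fun t => f (x + t • v) - t * ⟪f' x, v⟫ - L / 2 * t ^ 2 * ‖v‖ ^ 2 with hk
  have hderiv : ∀ t : ℝ, HasDerivAt k (⟪f' (x + t • v), v⟫ - ⟪f' x, v⟫ - L * t * ‖v‖ ^ 2) t := by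
    intro t
    have h1 : HasDerivAt (fun s : ℝ => f (x + s • v)) ⟪f' (x + t • v), v⟫ t :=
      hasDerivAt_line hgrad x v t
    have h2 : HasDerivAt (fun s : ℝ => s * ⟪f' x, v⟫) ⟪f' x, v⟫ t := by
      simpa using (hasDerivAt_id t).mul_const (⟪f' x, v⟫ : ℝ)
    have h3 : HasDerivAt (fun s : ℝ => L / 2 * s ^ 2 * ‖v‖ ^ 2) (L * t * ‖v‖ ^ 2) t := by
      have h4 := ((hasDerivAt_pow 2 t).const_mul (L / 2)).mul_const (‖v‖ ^ 2)
      refine h4.congr_deriv ?_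
      ring
    exact (h1.sub h2).sub h3
  have hmono : AntitoneOn k (Set.Icc 0 1) := by
    apply antitoneOn_of_deriv_nonpos (convex_Icc 0 1)
    · exact (Differentiable.continuous fun t => (hderiv t).differentiableAt).continuousOn
    · intro t _
      exact ((hderiv t).differentiableAt).differentiableWithinAt
    · intro t ht
      rw [interior_Icc] at ht
      rw [(hderiv t).deriv]
      have h4 : ⟪f' (x + t • v) - f' x, v⟫ ≤ ‖f' (x + t • v) - f' x‖ * ‖v‖ :=
        real_inner_le_norm _ _
      have h5 : ‖f' (x + t • v) - f' x‖ ≤ L * ‖t • v‖ := by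
        simpa using hLip (x + t • v) x
      have h6 : ‖t • v‖ = t * ‖v‖ := by
        rw [norm_smul, Real.norm_eq_abs, abs_of_pos ht.1]
      have h7 := inner_sub_left (𝕜 := ℝ) (f' (x + t • v)) (f' x) v
      have h9 : ‖f' (x + t • v) - f' x‖ * ‖v‖ ≤ L * (t * ‖v‖) * ‖v‖ := by
        rw [← h6]
        exact mul_le_mul_of_nonneg_right h5 (norm_nonneg v)
      have h8 : L * t * ‖v‖ ^ 2 = L * (t * ‖v‖) * ‖v‖ := by ring
      linarith
  have hle := hmono (Set.left_mem_Icc.2 zero_le_one) (Set.right_mem_Icc.2 zero_le_one) zero_le_one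
  have h0 : k 0 = f x := by simp [hk]
  have h1 : k 1 = f y - ⟪f' x, v⟫ - L / 2 * ‖v‖ ^ 2 := by
    simp [hk, hv]
  rw [h0, h1] at hle
  linarith

lemma grad_convex_aux {n : ℕ} {f : Euc n → ℝ} {f' : Euc n → Euc n}
    (hconv : ConvexOn ℝ Set.univ f) (hgrad : ∀ z, HasGradientAt f (f' z) z) (x u : Euc n) :
    f x + ⟪f' x, u - x⟫ ≤ f u := by
  set v := u - x with hv
  have hd : HasDerivAt (fun s : ℝ => f (x + s • v)) ⟪f' x, v⟫ 0 := by
    have h := hasDerivAt_line hgrad x v 0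
    simpa using h
  have hslope : Tendsto (slope (fun s : ℝ => f (x + s • v)) 0) (𝓝[>] 0) (𝓝 ⟪f' x, v⟫) :=
    (hasDerivAt_iff_tendsto_slope.mp hd).mono_left
      (nhdsWithin_mono _ (fun t ht => ne_of_gt ht))
  have hev : ∀ᶠ t in 𝓝[>] (0:ℝ), slope (fun s : ℝ => f (x + s • v)) 0 t ≤ f u - f x := by
    filter_upwards [Ioc_mem_nhdsGT_of_mem ⟨le_refl (0:ℝ), zero_lt_one⟩] with t ht
    have hcv := hconv.2 (Set.mem_univ x) (Set.mem_univ u)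
      (by linarith [ht.2] : (0:ℝ) ≤ 1 - t) ht.1.le (by ring)
    have hxt : (1 - t) • x + t • u = x + t • v := by
      rw [hv]; module
    rw [hxt] at hcv
    rw [slope_def_field]
    simp only [zero_smul, add_zero, sub_zero, smul_eq_mul] at *
    rw [div_le_iff₀ ht.1]
    nlinarith [ht.1]
  have := le_of_tendsto hslope hev
  linarith
set_option maxHeartbeats 1000000 in
theorem stmt_16 {n : ℕ} (L γ : ℝ) (hL : 0 < L) (hγ : γ ≥ L)
    (f : Euc n → ℝ) (f' : Euc n → Euc n) (g : Euc n → EReal)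
    (hconv : ConvexOn ℝ Set.univ f)
    (hgrad : ∀ x, HasGradientAt f (f' x) x)
    (hLip : ∀ x y, ‖f' x - f' y‖ ≤ L * ‖x - y‖)
    (hgbot : ∀ x, g x ≠ ⊥) (hgtop : ∃ x, g x ≠ ⊤)
    (hglsc : LowerSemicontinuous g)
    (hgconv : ∀ x y : Euc n, ∀ a b : ℝ, 0 ≤ a → 0 ≤ b → a + b = 1 →
      g (a • x + b • y) ≤ (a : EReal) * g x + (b : EReal) * g y)
    (p : Euc n → Euc n)
    (hp : ∀ xb x, ((f xb + ⟪f' xb, p xb - xb⟫ + γ / 2 * ‖p xb - xb‖ ^ 2 : ℝ) : EReal) + g (p xb)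
        ≤ ((f xb + ⟪f' xb, x - xb⟫ + γ / 2 * ‖x - xb‖ ^ 2 : ℝ) : EReal) + g x)
    (X : Set (Euc n))
    (hX : X = {x | ∀ y, (f x : EReal) + g x ≤ (f y : EReal) + g y})
    (hne : X.Nonempty)
    (xs : Euc n) (hxs : xs ∈ X)
    (fstar : ℝ) (hstar : (f xs : EReal) + g xs = (fstar : ℝ))
    (x : ℕ → Euc n)
    (hiter : ∀ k, x (k + 1) = x k - (1 / γ) • (γ • (x k - p (x k)))) :
    ∀ k, ((Metric.infDist (x (k + 1)) X ^ 2 : ℝ) : EReal)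
        + ((2 / γ : ℝ) : EReal) * (((f (x (k + 1)) : EReal) + g (x (k + 1))) - (fstar : ℝ))
      ≤ ((Metric.infDist (x k) X ^ 2 : ℝ) : EReal) := by
  intro k
  have hγ0 : (0:ℝ) < γ := lt_of_lt_of_le hL hγ
  have hx1 : x (k + 1) = p (x k) := by
    rw [hiter k, smul_smul, one_div, inv_mul_cancel₀ hγ0.ne', one_smul]
    abel
  set xb := x k with hxb
  set xp := p xb with hxp
  -- finiteness of g xp
  obtain ⟨x0, hx0⟩ := hgtop
  have hgxp_ne_top : g xp ≠ ⊤ := by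
    intro htop
    have h1 := hp xb x0
    rw [← hxp, htop, EReal.coe_add_top] at h1
    exact absurd (h1.trans_lt (EReal.add_lt_top (EReal.coe_ne_top _) hx0)) (lt_irrefl _)
  have hgp : g xp = (((g xp).toReal : ℝ) : EReal) := (EReal.coe_toReal hgxp_ne_top (hgbot xp)).symm
  set gp := (g xp).toReal with hgp_def
  -- values on X
  have hXfin : ∀ u ∈ X, ∃ gu : ℝ, g u = (gu : EReal) ∧ f u + gu = fstar := by
    intro u hu
    rw [hX] at hu
    have hxs' := hxs
    rw [hX] at hxs'
    have h1 : (f u : EReal) + g u ≤ ((fstar : ℝ) : EReal) := hstar ▸ hu xs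
    have h2 : ((fstar : ℝ) : EReal) ≤ (f u : EReal) + g u := hstar ▸ hxs' u
    have heq : (f u : EReal) + g u = ((fstar : ℝ) : EReal) := le_antisymm h1 h2
    have hnt : g u ≠ ⊤ := by
      intro htop
      rw [htop, EReal.coe_add_top] at heq
      exact (EReal.top_ne_coe _) heq
    refine ⟨(g u).toReal, (EReal.coe_toReal hnt (hgbot u)).symm, ?_⟩
    rw [← EReal.coe_toReal hnt (hgbot u), ← EReal.coe_add] at heq
    exact_mod_cast heq
  -- key per-point estimate
  have key : ∀ u ∈ X, dist xp u ^ 2 + 2 / γ * (f xp + gp - fstar) ≤ dist xb u ^ 2 := by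
    intro u hu
    obtain ⟨gu, hgu, hfu⟩ := hXfin u hu
    have hns : ∀ z : Euc n, ‖z‖ ^ 2 = ⟪z, z⟫ := fun z => (real_inner_self_eq_norm_sq z).symm
    have husq : ‖u - xp‖ ^ 2
        = ‖u - xb‖ ^ 2 - 2 * ⟪xp - xb, u - xb⟫ + ‖xp - xb‖ ^ 2 := by
      have hux : u - xp = (u - xb) - (xp - xb) := by abel
      rw [hux, norm_sub_sq_real, real_inner_comm]
    have stepA : f xb + ⟪f' xb, xp - xb⟫ + γ / 2 * ‖xp - xb‖ ^ 2 + gp + γ / 2 * ‖u - xp‖ ^ 2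
        ≤ f xb + ⟪f' xb, u - xb⟫ + γ / 2 * ‖u - xb‖ ^ 2 + gu := by
      apply real_le_of_forall_pos
      intro ε hε
      set C := γ / 2 * ‖u - xp‖ ^ 2 with hC
      have hC0 : 0 ≤ C := by positivity
      set t := min (1/2 : ℝ) (ε / (C + 1)) with ht_def
      have ht0 : 0 < t := lt_min (by norm_num) (div_pos hε (by linarith))
      have ht1 : t < 1 := lt_of_le_of_lt (min_le_left _ _) (by norm_num)
      have htC : t * C ≤ ε := by
        have h1 : t ≤ ε / (C + 1) := min_le_right _ _
        have h2 : t * C ≤ ε / (C + 1) * C := mul_le_mul_of_nonneg_right h1 hC0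
        have h3 : ε / (C + 1) * C ≤ ε := by
          rw [div_mul_eq_mul_div, div_le_iff₀ (by linarith)]
          nlinarith
        linarith
      have hfix : f xb + ⟪f' xb, xp - xb⟫ + γ / 2 * ‖xp - xb‖ ^ 2 + gp + γ / 2 * ‖u - xp‖ ^ 2
          ≤ f xb + ⟪f' xb, u - xb⟫ + γ / 2 * ‖u - xb‖ ^ 2 + gu
            + γ / 2 * t * ‖u - xp‖ ^ 2 := by
        have ha0 : (0:ℝ) ≤ 1 - t := by linarith
        have h1 := hp xb ((1 - t) • xp + t • u)
        rw [← hxp, hgp] at h1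
        have h2 := hgconv xp u (1 - t) t ha0 ht0.le (by ring)
        rw [hgp, hgu] at h2
        norm_cast at h2
        have h3 := h1.trans (add_le_add_right h2 _)
        norm_cast at h3
        have hw : ((1 - t) • xp + t • u) - xb = (1 - t) • (xp - xb) + t • (u - xb) := by
          module
        rw [hw] at h3
        have hinner : ⟪f' xb, (1 - t) • (xp - xb) + t • (u - xb)⟫
            = (1 - t) * ⟪f' xb, xp - xb⟫ + t * ⟪f' xb, u - xb⟫ := by
          rw [inner_add_right, real_inner_smul_right, real_inner_smul_right]
        have hnorm : ‖(1 - t) • (xp - xb) + t • (u - xb)‖ ^ 2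
            = (1 - t) ^ 2 * ‖xp - xb‖ ^ 2 + 2 * ((1 - t) * t) * ⟪xp - xb, u - xb⟫
              + t ^ 2 * ‖u - xb‖ ^ 2 := by
          simp only [hns, inner_add_left, inner_add_right, real_inner_smul_left,
            real_inner_smul_right]
          rw [real_inner_comm (u - xb) (xp - xb)]
          ring
        rw [hinner, hnorm] at h3
        rw [husq]
        refine le_of_mul_le_mul_left ?_ ht0
        linarith [h3]
      have hts : γ / 2 * t * ‖u - xp‖ ^ 2 = t * C := by rw [hC]; ring
      linarith [hfix, htC, hts]
    have stepB : f xp ≤ f xb + ⟪f' xb, xp - xb⟫ + γ / 2 * ‖xp - xb‖ ^ 2 := by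
      have h := descent_aux hgrad hLip xb xp
      nlinarith [sq_nonneg ‖xp - xb‖]
    have stepC : f xb + ⟪f' xb, u - xb⟫ ≤ f u := grad_convex_aux hconv hgrad xb u
    have hcomb : f xp + gp + γ / 2 * ‖u - xp‖ ^ 2 ≤ fstar + γ / 2 * ‖u - xb‖ ^ 2 := by
      linarith [stepA, stepB, stepC, hfu]
    have hd1 : dist xp u = ‖u - xp‖ := by rw [dist_eq_norm, norm_sub_rev]
    have hd2 : dist xb u = ‖u - xb‖ := by rw [dist_eq_norm, norm_sub_rev]
    rw [hd1, hd2]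
    refine le_of_mul_le_mul_left ?_ hγ0
    have hgc : γ * (2 / γ * (f xp + gp - fstar)) = 2 * (f xp + gp - fstar) := by
      field_simp
    linarith [hcomb, hgc]
  -- conclude
  rw [hx1, hgp]
  have hreal : Metric.infDist xp X ^ 2 + 2 / γ * (f xp + gp - fstar)
      ≤ Metric.infDist xb X ^ 2 := by
    apply real_le_of_forall_pos
    intro ε hε
    have hdlt : Metric.infDist xb X < Real.sqrt (Metric.infDist xb X ^ 2 + ε) := by
      nth_rewrite 1 [← Real.sqrt_sq (Metric.infDist_nonneg)]
      exact Real.sqrt_lt_sqrt (sq_nonneg _) (by linarith)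
    obtain ⟨u, hu, hdu⟩ := (Metric.infDist_lt_iff hne).mp hdlt
    have hdu2 : dist xb u ^ 2 < Metric.infDist xb X ^ 2 + ε := by
      have h1 : dist xb u ^ 2 < Real.sqrt (Metric.infDist xb X ^ 2 + ε) ^ 2 :=
        pow_lt_pow_left₀ hdu dist_nonneg (by norm_num)
      rwa [Real.sq_sqrt (by positivity)] at h1
    have h2 : Metric.infDist xp X ^ 2 ≤ dist xp u ^ 2 :=
      pow_le_pow_left₀ Metric.infDist_nonneg (Metric.infDist_le_dist_of_mem hu) 2
    linarith [key u hu]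
  exact_mod_cast hreal
end
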